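/- arXiv:1804.02531 — 4 statements merged into one kernel-verified Lean document; each statement's English description precedes it below -/
import Mathlib

section
/- Let n ≥ 2, m ≥ 1, and let L be a length distribution of length m with UD_n(L) nonempty. Then ρ_{n,L} = |PR_n(L)|/|UD_n(L)| ≥ q_{n,m} · ς_{n,m}^{m−1}. -/
open Finset Filter Topology

/-- A code `(v 0, …, v (m-1))` is *uniquely decodable* if any two nonempty sequences of
indices whose corresponding concatenations of code words coincide are equal. -/
def IsUDCode {X : Type*} {m : ℕ} (v : Fin m → List X) : Prop :=
  ∀ s t : List (Fin m), s ≠ [] → t ≠ [] →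
    (s.map v).flatten = (t.map v).flatten → s = t

/-- A *prefix code*: an injective sequence of nonempty words where no code word
is a prefix of another. -/
def IsPrefixCode {X : Type*} {m : ℕ} (v : Fin m → List X) : Prop :=
  Function.Injective v ∧ (∀ i, v i ≠ []) ∧ ∀ i j, i ≠ j → ¬ v i <+: v j

/-- The set of uniquely decodable codes over an `n`-letter alphabet with
length distribution `L`. -/
def UD (n : ℕ) {m : ℕ} (L : Fin m → ℕ) : Set (Fin m → List (Fin n)) :=
  {v | (∀ i, (v i).length = L i) ∧ IsUDCode v}

/-- The set of prefix codes over an `n`-letter alphabet with length distribution `L`. -/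
def PR (n : ℕ) {m : ℕ} (L : Fin m → ℕ) : Set (Fin m → List (Fin n)) :=
  {v | (∀ i, (v i).length = L i) ∧ IsPrefixCode v}

/-- `ρ_{n,L} = |PR_n(L)| / |UD_n(L)|`. -/
noncomputable def rho (n : ℕ) {m : ℕ} (L : Fin m → ℕ) : ℝ :=
  ((PR n L).ncard : ℝ) / ((UD n L).ncard : ℝ)

/-- `ξ_{n,m} = inf_{L ∈ ℒ_{n,m}} ρ_{n,L}`. -/
noncomputable def xi (n m : ℕ) : ℝ :=
  sInf {r : ℝ | ∃ L : Fin m → ℕ, (∀ i, 1 ≤ L i) ∧ (UD n L).Nonempty ∧ r = rho n L}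

/-- `ς_{n,m} = (n - (m mod (n-1))) / n^{⌊m/(n-1)⌋ + 1}`. -/
noncomputable def varsigma (n m : ℕ) : ℝ :=
  ((n : ℝ) - (m % (n - 1) : ℕ)) / (n : ℝ) ^ (m / (n - 1) + 1)

/-- `q_{n,m}`: `1` if `n ≥ m`, and `(m-1)!/(m-1)^{m-1}` if `n < m`. -/
noncomputable def qnm (n m : ℕ) : ℝ :=
  if m ≤ n then 1 else (Nat.factorial (m - 1) : ℝ) / ((m - 1 : ℕ) : ℝ) ^ (m - 1)

/-- `ϖ_{n,m} = ∏_{i=1}^{m-1} (1 - (1 - n^{-i})/(n-1))`. -/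
noncomputable def varpi (n m : ℕ) : ℝ :=
  ∏ i ∈ Finset.Icc 1 (m - 1), (1 - (1 - 1 / (n : ℝ) ^ i) / ((n : ℝ) - 1))

/-- `η_{n,m} = 1 + Σ_{i=1}^{m-1} C(m-1,i)/(n^i - 1)`. -/
noncomputable def eta (n m : ℕ) : ℝ :=
  1 + ∑ i ∈ Finset.Icc 1 (m - 1), ((m - 1).choose i : ℝ) / ((n : ℝ) ^ i - 1)

-- ===== auxiliary development =====

section Aux
open Finset

lemma varsigma_pos {n : ℕ} (hn : 2 ≤ n) (k : ℕ) : 0 < varsigma n k := by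
  have hr : k % (n-1) < n - 1 := Nat.mod_lt _ (by omega)
  apply div_pos
  · have h2 : (k % (n-1) : ℕ) < n := by omega
    have := (Nat.cast_lt (α := ℝ)).2 h2
    linarith
  · positivity

lemma varsigma_le_inv_pow {n : ℕ} (hn : 2 ≤ n) (k : ℕ) :
    varsigma n k ≤ ((n:ℝ) ^ (k / (n-1)))⁻¹ := by
  have hn0 : (0:ℝ) < (n:ℝ) := by positivity
  rw [varsigma, div_le_iff₀ (by positivity), pow_succ, ← mul_assoc, inv_mul_cancel₀ (by positivity)]
  have : (0:ℝ) ≤ (k % (n-1) : ℕ) := by positivity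
  linarith

lemma varsigma_succ_le {n : ℕ} (hn : 2 ≤ n) (k : ℕ) :
    varsigma n (k+1) + ((n:ℝ) ^ ((k+1) / (n-1) + 1))⁻¹ ≤ varsigma n k := by
  set d := n - 1 with hd
  have hd1 : 1 ≤ d := by omega
  have hn0 : (0:ℝ) < (n:ℝ) := by positivity
  have hnz : (n:ℝ) ≠ 0 := ne_of_gt hn0
  obtain ⟨Q, hQ⟩ : ∃ Q, (k+1)/d = Q := ⟨_, rfl⟩
  obtain ⟨r, hr⟩ : ∃ r, (k+1)%d = r := ⟨_, rfl⟩
  have hrd : r < d := hr ▸ Nat.mod_lt _ (by omega)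
  have hkey : d * Q + r = k + 1 := by rw [← hQ, ← hr]; exact Nat.div_add_mod (k+1) d
  have hcomm : d * Q = Q * d := Nat.mul_comm _ _
  rcases Nat.eq_zero_or_pos r with h0 | hpos
  · obtain ⟨q, rfl⟩ : ∃ q, Q = q + 1 := by
      refine ⟨Q - 1, ?_⟩
      rcases Nat.eq_zero_or_pos Q with h | h
      · rw [h] at hkey; omega
      · omega
    have hq1 : (q+1) * d = q * d + d := by ring
    have hk : k = (d-1) + q * d := by omega
    have hmod : k % d = d - 1 := by
      rw [hk, Nat.add_mul_mod_self_right, Nat.mod_eq_of_lt (by omega)]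
    have hdiv : k / d = q := by
      rw [hk, Nat.add_mul_div_right _ _ (by omega : 0 < d), Nat.div_eq_of_lt (by omega)]
      omega
    rw [varsigma, varsigma, hmod, hdiv, ← hd, hQ, hr, h0]
    have hcast : ((d - 1 : ℕ) : ℝ) = (n:ℝ) - 2 := by
      have h2 : d - 1 = n - 2 := by omega
      rw [h2, Nat.cast_sub (by omega)]
      norm_num
    rw [hcast]
    have hpow : (0:ℝ) < (n:ℝ)^q := by positivity
    have h2n : (2:ℝ) ≤ (n:ℝ) := by exact_mod_cast hn
    push_cast
    rw [show (q+1) + 1 = q + 2 by ring, pow_add, pow_add, pow_one]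
    field_simp
    ring_nf
    nlinarith [hpow, mul_pos hpow hpow, mul_pos (mul_pos hpow hpow) hn0]
  · have hk : k = (r-1) + Q * d := by omega
    have hmod : k % d = r - 1 := by
      rw [hk, Nat.add_mul_mod_self_right, Nat.mod_eq_of_lt (by omega)]
    have hdiv : k / d = Q := by
      rw [hk, Nat.add_mul_div_right _ _ (by omega : 0 < d), Nat.div_eq_of_lt (by omega)]
      omega
    rw [varsigma, varsigma, hmod, hdiv, ← hd, hQ, hr]
    rw [inv_eq_one_div, ← add_div]
    apply le_of_eq
    congr 1
    rw [Nat.cast_sub hpos]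
    push_cast; ring

lemma varsigma_antitone {n : ℕ} (hn : 2 ≤ n) : Antitone (varsigma n) := by
  apply antitone_nat_of_succ_le
  intro k
  have h := varsigma_succ_le hn k
  have : (0:ℝ) < ((n:ℝ) ^ ((k+1) / (n-1) + 1))⁻¹ := by positivity
  linarith

lemma defic {ι : Type*} [DecidableEq ι] {n : ℕ} (hn : 2 ≤ n) (f : ι → ℕ) (s : Finset ι)
    (h : ∑ j ∈ s, ((n:ℝ)^(f j))⁻¹ < 1) :
    varsigma n s.card ≤ 1 - ∑ j ∈ s, ((n:ℝ)^(f j))⁻¹ := by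
  induction s using Finset.strongInduction with
  | _ s ih =>
    have hn0 : (0:ℝ) < (n:ℝ) := by positivity
    have hnz : (n:ℝ) ≠ 0 := ne_of_gt hn0
    set Q := s.card / (n-1) with hQ
    by_cases hA : ∀ j ∈ s, f j ≤ Q
    · set N : ℕ := ∑ j ∈ s, n^(Q - f j) with hNdef
      have hN : (N:ℝ) = (n:ℝ)^Q * ∑ j ∈ s, ((n:ℝ)^(f j))⁻¹ := by
        rw [hNdef, Finset.mul_sum]
        push_cast
        refine Finset.sum_congr rfl fun j hj => ?_
        rw [pow_sub₀ _ hnz (hA j hj)]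
      have hNlt : N < n^Q := by
        have : (N:ℝ) < (n:ℝ)^Q := by
          rw [hN]
          calc (n:ℝ)^Q * ∑ j ∈ s, ((n:ℝ)^(f j))⁻¹ < (n:ℝ)^Q * 1 := by
                apply mul_lt_mul_of_pos_left h (by positivity)
            _ = (n:ℝ)^Q := by ring
        exact_mod_cast this
      have hNle : (N:ℝ) ≤ (n:ℝ)^Q - 1 := by
        have : (N:ℝ) ≤ ((n^Q - 1 : ℕ) : ℝ) := by exact_mod_cast Nat.le_sub_one_of_lt hNlt
        rw [Nat.cast_sub (Nat.one_le_pow _ _ (by omega))] at this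
        push_cast at this
        exact this
      have hSle : ∑ j ∈ s, ((n:ℝ)^(f j))⁻¹ ≤ 1 - ((n:ℝ)^Q)⁻¹ := by
        have hpow : (0:ℝ) < (n:ℝ)^Q := by positivity
        have hS : ∑ j ∈ s, ((n:ℝ)^(f j))⁻¹ = (N:ℝ) / (n:ℝ)^Q := by
          rw [hN]; field_simp
        rw [hS, div_le_iff₀ hpow]
        rw [sub_mul, one_mul, inv_mul_cancel₀ (ne_of_gt hpow)]
        linarith
      have := varsigma_le_inv_pow hn s.card
      rw [← hQ] at this
      linarith
    · push_neg at hA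
      obtain ⟨j, hj, hfj⟩ := hA
      have hfj' : Q + 1 ≤ f j := by omega
      have hcard : s.card = (s.erase j).card + 1 := by
        rw [Finset.card_erase_of_mem hj]
        have : 1 ≤ s.card := Finset.card_pos.2 ⟨j, hj⟩
        omega
      have hsplit : ∑ x ∈ s.erase j, ((n:ℝ)^(f x))⁻¹ + ((n:ℝ)^(f j))⁻¹
          = ∑ x ∈ s, ((n:ℝ)^(f x))⁻¹ := Finset.sum_erase_add s _ hj
      have hterm : (0:ℝ) ≤ ((n:ℝ)^(f j))⁻¹ := by positivity
      have h' : ∑ x ∈ s.erase j, ((n:ℝ)^(f x))⁻¹ < 1 := by linarith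
      have hih := ih (s.erase j) (Finset.erase_ssubset hj) h'
      have hstep := varsigma_succ_le hn (s.erase j).card
      rw [← hcard] at hstep
      rw [← hQ] at hstep
      have hmono : ((n:ℝ)^(f j))⁻¹ ≤ ((n:ℝ)^(Q+1))⁻¹ := by
        apply inv_anti₀ (by positivity)
        exact pow_le_pow_right₀ (by exact_mod_cast (by omega : 1 ≤ n)) hfj'
      rw [hcard]
      rw [← hcard]
      linarith

lemma kraft_pow_le {n m : ℕ} {L : Fin m → ℕ} {v : Fin m → List (Fin n)}
    (hn : 1 ≤ n) (hlen : ∀ i, (v i).length = L i) (hud : IsUDCode v) (t : ℕ) (ht : 1 ≤ t) :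
    (∑ i, ((n:ℝ)^(L i))⁻¹) ^ t ≤ ((t * ((univ : Finset (Fin m)).sup L) : ℕ) : ℝ) + 1 := by
  classical
  set A := (univ : Finset (Fin m)).sup L with hA
  set ℓ : (Fin t → Fin m) → ℕ := fun g => ∑ i, L (g i) with hldef
  have expand : (∑ i, ((n:ℝ)^(L i))⁻¹) ^ t = ∑ g : Fin t → Fin m, ((n:ℝ)^(ℓ g))⁻¹ := by
    rw [← Fin.prod_const t (∑ i, ((n:ℝ)^(L i))⁻¹)]
    rw [Finset.prod_univ_sum (fun _ => (univ : Finset (Fin m))) (fun _ j => ((n:ℝ)^(L j))⁻¹)]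
    rw [Fintype.piFinset_univ]
    refine Finset.sum_congr rfl fun g _ => ?_
    rw [Finset.prod_inv_distrib, Finset.prod_pow_eq_pow_sum]
  rw [expand]
  rw [Finset.sum_comp (fun b => ((n:ℝ)^b)⁻¹) ℓ]
  have hcount : ∀ b ∈ (univ : Finset (Fin t → Fin m)).image ℓ,
      ((univ.filter (fun g => ℓ g = b)).card : ℝ) ≤ (n:ℝ)^b := by
    intro b _
    have hinj : (univ.filter (fun g : Fin t → Fin m => ℓ g = b)).card
        ≤ ((univ : Finset (List.Vector (Fin n) b)).image (fun u => u.toList)).card := by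
      apply Finset.card_le_card_of_injOn (fun g => ((List.ofFn g).map v).flatten)
      · intro g hg
        simp only [Finset.coe_filter, Set.mem_setOf_eq] at hg
        refine Finset.mem_image.2 ⟨⟨((List.ofFn g).map v).flatten, ?_⟩, Finset.mem_univ _, rfl⟩
        rw [List.length_flatten, List.map_map, List.map_ofFn, List.sum_ofFn]
        simp only [Function.comp]
        rw [← hg.2, hldef]
        exact Finset.sum_congr rfl fun i _ => by rw [hlen]
      · intro g hg g' hg' heq
        have hne : List.ofFn g ≠ [] := by
          simp [List.ofFn_eq_nil_iff]
          omega
        have hne' : List.ofFn g' ≠ [] := by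
          simp [List.ofFn_eq_nil_iff]
          omega
        have := hud (List.ofFn g) (List.ofFn g') hne hne' heq
        exact List.ofFn_inj.1 this
    have hcard : ((univ : Finset (List.Vector (Fin n) b)).image (fun u => u.toList)).card
        = n ^ b := by
      rw [Finset.card_image_of_injective (f := fun u : List.Vector (Fin n) b => u.toList) _
        (fun a b h => Subtype.ext h)]
      rw [Finset.card_univ, card_vector, Fintype.card_fin]
    rw [hcard] at hinj
    calc ((univ.filter (fun g => ℓ g = b)).card : ℝ) ≤ ((n:ℕ)^b : ℕ) := by exact_mod_cast hinj
      _ = (n:ℝ)^b := by push_cast; ring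
  calc ∑ b ∈ (univ : Finset (Fin t → Fin m)).image ℓ,
        ((univ.filter (fun g => ℓ g = b)).card) • ((n:ℝ)^b)⁻¹
      ≤ ∑ b ∈ (univ : Finset (Fin t → Fin m)).image ℓ, (1:ℝ) := by
        apply Finset.sum_le_sum
        intro b hb
        rw [nsmul_eq_mul]
        have hn0 : (0:ℝ) < (n:ℝ) := by exact_mod_cast hn
        have hpow : (0:ℝ) < (n:ℝ)^b := by positivity
        rw [← le_div_iff₀ (by positivity), one_div, inv_inv]
        exact hcount b hb
    _ = ((univ : Finset (Fin t → Fin m)).image ℓ).card := by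
        rw [Finset.sum_const, nsmul_eq_mul, mul_one]
    _ ≤ ((Finset.Iic (t * A)).card : ℝ) := by
        have hsub : (univ : Finset (Fin t → Fin m)).image ℓ ⊆ Finset.Iic (t * A) := by
          intro b hb
          obtain ⟨g, _, rfl⟩ := Finset.mem_image.1 hb
          rw [Finset.mem_Iic, hldef]
          calc ∑ i, L (g i) ≤ ∑ _i : Fin t, A :=
                Finset.sum_le_sum fun i _ => Finset.le_sup (Finset.mem_univ _)
            _ = t * A := by
                rw [Finset.sum_const, smul_eq_mul, Finset.card_univ, Fintype.card_fin]
        exact_mod_cast Finset.card_le_card hsub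
    _ = ((t * A : ℕ) : ℝ) + 1 := by rw [Nat.card_Iic]; push_cast; ring

lemma kraft_le_one {n m : ℕ} {L : Fin m → ℕ} {v : Fin m → List (Fin n)}
    (hn : 1 ≤ n) (hlen : ∀ i, (v i).length = L i) (hud : IsUDCode v) :
    ∑ i, ((n:ℝ)^(L i))⁻¹ ≤ 1 := by
  set K := ∑ i, ((n:ℝ)^(L i))⁻¹ with hK
  set A := (univ : Finset (Fin m)).sup L with hA
  by_contra hcon
  push_neg at hcon
  set ε : ℝ := K - 1 with hε
  have hε0 : 0 < ε := by simp [hε]; linarith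
  set T : ℕ := max 1 ⌈(2*(A:ℝ)+2)/ε^2⌉₊ with hT
  have hT1 : 1 ≤ T := le_max_left _ _
  have hTb : (2*(A:ℝ)+2)/ε^2 ≤ T := by
    calc (2*(A:ℝ)+2)/ε^2 ≤ (⌈(2*(A:ℝ)+2)/ε^2⌉₊ : ℝ) := Nat.le_ceil _
      _ ≤ T := Nat.cast_le.2 (le_max_right _ _)
  have hTε : 2*(A:ℝ)+2 ≤ T * ε^2 := by
    rw [div_le_iff₀ (by positivity)] at hTb
    linarith
  have h1 := kraft_pow_le hn hlen hud (2*T) (by omega)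
  rw [← hK, ← hA] at h1
  have h2 : (1 + (T:ℝ)*ε)^2 ≤ K^(2*T) := by
    have hb : 1 + (T:ℝ)*ε ≤ K^T := by
      have := one_add_mul_le_pow (a := ε) (by linarith) T
      calc 1 + (T:ℝ)*ε ≤ (1+ε)^T := this
        _ = K^T := by rw [hε]; ring_nf
    calc (1 + (T:ℝ)*ε)^2 ≤ (K^T)^2 := by
          apply pow_le_pow_left₀ (by positivity) hb
      _ = K^(2*T) := by rw [← pow_mul]; ring_nf
  have h3 : (T:ℝ)^2 * ε^2 ≤ (1 + (T:ℝ)*ε)^2 := by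
    have hTpos : (0:ℝ) ≤ (T:ℝ) := by positivity
    nlinarith
  have h4 : ((2*T*A : ℕ) : ℝ) + 1 < (T:ℝ)^2 * ε^2 := by
    push_cast
    have hT1' : (1:ℝ) ≤ (T:ℝ) := by exact_mod_cast hT1
    nlinarith
  linarith

lemma codes_finite (n m : ℕ) (L : Fin m → ℕ) :
    {v : Fin m → List (Fin n) | ∀ i, (v i).length = L i}.Finite := by
  apply Set.Finite.subset
    (Set.Finite.pi (fun i : Fin m => List.finite_length_eq (α := Fin n) (n := L i)))
  intro v hv
  rw [Set.mem_univ_pi]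
  exact hv

lemma PR_finite (n m : ℕ) (L : Fin m → ℕ) : (PR n L).Finite :=
  (codes_finite n m L).subset (fun v hv => hv.1)

lemma UD_finite (n m : ℕ) (L : Fin m → ℕ) : (UD n L).Finite :=
  (codes_finite n m L).subset (fun v hv => hv.1)

lemma ext_count {n m : ℕ} (a : ℕ) (w : Fin m → List (Fin n)) :
    n ^ a - ∑ j, n ^ (a - (w j).length) ≤
      ((univ : Finset (List.Vector (Fin n) a)).filter
        (fun u => ∀ j, ¬ (w j <+: u.toList))).card := by
  classical
  have hsplit := Finset.card_filter_add_card_filter_not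
    (s := (univ : Finset (List.Vector (Fin n) a)))
    (p := fun u => ∃ j, w j <+: u.toList)
  have huniv : (univ : Finset (List.Vector (Fin n) a)).card = n ^ a := by
    rw [Finset.card_univ, card_vector, Fintype.card_fin]
  have hneg : (univ.filter (fun u : List.Vector (Fin n) a => ¬ ∃ j, w j <+: u.toList))
      = (univ.filter (fun u => ∀ j, ¬ (w j <+: u.toList))) := by
    apply Finset.filter_congr
    intro u _
    simp [not_exists]
  have hbad : (univ.filter (fun u : List.Vector (Fin n) a => ∃ j, w j <+: u.toList)).card
      ≤ ∑ j, n ^ (a - (w j).length) := by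
    calc (univ.filter (fun u : List.Vector (Fin n) a => ∃ j, w j <+: u.toList)).card
        ≤ (univ.biUnion (fun j => univ.filter
            (fun u : List.Vector (Fin n) a => w j <+: u.toList))).card := by
          apply Finset.card_le_card
          intro u hu
          rw [Finset.mem_filter] at hu
          obtain ⟨j, hj⟩ := hu.2
          exact Finset.mem_biUnion.2 ⟨j, Finset.mem_univ _, Finset.mem_filter.2 ⟨hu.1, hj⟩⟩
      _ ≤ ∑ j, (univ.filter (fun u : List.Vector (Fin n) a => w j <+: u.toList)).card :=
          Finset.card_biUnion_le
      _ ≤ ∑ j, n ^ (a - (w j).length) := by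
          apply Finset.sum_le_sum
          intro j _
          have : (univ.filter (fun u : List.Vector (Fin n) a => w j <+: u.toList)).card
              ≤ (univ : Finset (List.Vector (Fin n) (a - (w j).length))).card := by
            apply Finset.card_le_card_of_injOn
              (fun u => ⟨u.toList.drop (w j).length, by
                rw [List.length_drop, List.Vector.toList_length]⟩)
            · intro u _; exact Finset.mem_univ _
            · intro u hu u' hu' heq
              rw [Finset.coe_filter, Set.mem_setOf_eq] at hu hu'
              obtain ⟨t, ht⟩ := hu.2
              obtain ⟨t', ht'⟩ := hu'.2
              have hdrop := congrArg Subtype.val heq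
              simp only at hdrop
              rw [← ht, ← ht'] at hdrop
              rw [List.drop_left, List.drop_left] at hdrop
              apply Subtype.ext
              show u.toList = u'.toList
              rw [← ht, ← ht', hdrop]
          rw [Finset.card_univ, card_vector, Fintype.card_fin] at this
          exact this
  rw [hneg, huniv] at hsplit
  omega

lemma snoc_mem_PR {n m : ℕ} {L : Fin (m+1) → ℕ} (hmono : Monotone L) (hL : ∀ i, 1 ≤ L i)
    {w : Fin m → List (Fin n)} (hw : w ∈ PR n (fun i => L i.castSucc))
    {u : List (Fin n)} (hu : u.length = L (Fin.last m)) (hpre : ∀ j, ¬ w j <+: u) :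
    Fin.snoc w u ∈ PR n L := by
  obtain ⟨hwlen, hwinj, hwne, hwpre⟩ := hw
  have hlen : ∀ i, ((Fin.snoc w u : Fin (m+1) → List (Fin n)) i).length = L i := by
    intro i
    induction i using Fin.lastCases with
    | last => rw [Fin.snoc_last]; exact hu
    | cast i => rw [Fin.snoc_castSucc]; exact hwlen i
  have hne : ∀ i, (Fin.snoc w u : Fin (m+1) → List (Fin n)) i ≠ [] := by
    intro i
    have h1 := hL i
    have h2 := hlen i
    intro hnil
    rw [hnil] at h2
    simp at h2
    omega
  have hpre' : ∀ i j, i ≠ j →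
      ¬ (Fin.snoc w u : Fin (m+1) → List (Fin n)) i <+:
        (Fin.snoc w u : Fin (m+1) → List (Fin n)) j := by
    intro i j hij
    induction i using Fin.lastCases with
    | last =>
      induction j using Fin.lastCases with
      | last => exact absurd rfl hij
      | cast j =>
        rw [Fin.snoc_last, Fin.snoc_castSucc]
        intro h
        have hlelen : u.length ≤ (w j).length := h.length_le
        have : (w j).length ≤ u.length := by
          rw [hwlen j, hu]
          exact hmono (Fin.le_last _)
        have heq : u = w j := h.eq_of_length (by omega)
        exact hpre j (heq ▸ List.prefix_refl u)
    | cast i =>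
      induction j using Fin.lastCases with
      | last =>
        rw [Fin.snoc_last, Fin.snoc_castSucc]
        exact hpre i
      | cast j =>
        rw [Fin.snoc_castSucc, Fin.snoc_castSucc]
        exact hwpre i j (fun h => hij (by rw [h]))
  refine ⟨hlen, ?_, hne, hpre'⟩
  intro i j hij
  by_contra hne'
  exact hpre' i j hne' (hij ▸ List.prefix_refl _)

lemma pr_count (n : ℕ) : ∀ (m : ℕ) (L : Fin m → ℕ), Monotone L → (∀ i, 1 ≤ L i) →
    ∏ i, (n ^ L i - ∑ j ∈ Finset.Iio i, n ^ (L i - L j)) ≤ Nat.card (PR n L) := by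
  intro m
  induction m with
  | zero =>
    intro L _ _
    rw [Finset.univ_eq_empty, Finset.prod_empty]
    have hmem : (fun i : Fin 0 => i.elim0) ∈ PR n L := by
      refine ⟨fun i => i.elim0, fun x y h => ?_, fun i => i.elim0, fun i => i.elim0⟩
      exact x.elim0
    have hfin : (PR n L).Finite := PR_finite n 0 L
    haveI := hfin.to_subtype
    haveI : Nonempty ↥(PR n L) := ⟨⟨_, hmem⟩⟩
    exact Nat.one_le_iff_ne_zero.2 (Nat.card_ne_zero.2 ⟨‹_›, ‹_›⟩)
  | succ m ih =>
    intro L hmono hL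
    classical
    set L' : Fin m → ℕ := fun i => L i.castSucc with hL'
    have hmono' : Monotone L' := fun i j h => hmono (by simpa using h)
    have hL1' : ∀ i, 1 ≤ L' i := fun i => hL _
    set a := L (Fin.last m) with ha
    set c : ℕ := n ^ a - ∑ j : Fin m, n ^ (a - L' j) with hc
    have hIio : ∀ (i : Fin m), (Finset.Iio (i.castSucc) : Finset (Fin (m+1)))
        = (Finset.Iio i).map Fin.castSuccEmb := by
      intro i
      ext k
      simp only [Finset.mem_Iio, Finset.mem_map, Fin.castSuccEmb]
      constructor
      · intro hk
        have hkv : (k : ℕ) < (i : ℕ) := by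
          simpa [Fin.lt_def] using hk
        exact ⟨⟨k, by omega⟩, by simpa [Fin.lt_def] using hkv, by
          apply Fin.ext; simp⟩
      · rintro ⟨j, hj, rfl⟩
        simp only [Fin.lt_def] at hj ⊢
        simpa using hj
    have hIioLast : (Finset.Iio (Fin.last m) : Finset (Fin (m+1)))
        = Finset.univ.map Fin.castSuccEmb := by
      ext k
      simp only [Finset.mem_Iio, Finset.mem_map, Fin.castSuccEmb]
      constructor
      · intro hk
        have hkv : (k : ℕ) < m := by simpa [Fin.lt_def] using hk
        exact ⟨⟨k, hkv⟩, Finset.mem_univ _, by apply Fin.ext; simp⟩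
      · rintro ⟨j, _, rfl⟩
        simp [Fin.lt_def]
    have hsplit : ∏ i : Fin (m+1), (n ^ L i - ∑ j ∈ Finset.Iio i, n ^ (L i - L j))
        = (∏ i : Fin m, (n ^ L' i - ∑ j ∈ Finset.Iio i, n ^ (L' i - L' j))) * c := by
      rw [Fin.prod_univ_castSucc]
      congr 1
      · refine Finset.prod_congr rfl fun i _ => ?_
        rw [hIio i, Finset.sum_map]
        rfl
      · rw [hc, hIioLast, Finset.sum_map]
        rfl
    rw [hsplit]
    have hfinPR : (PR n L).Finite := PR_finite n (m+1) L
    haveI := hfinPR.to_subtype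
    have hkey : (Nat.card ↥(PR n L')) * c ≤ Nat.card ↥(PR n L) := by
      set S : (Fin m → List (Fin n)) → Finset (List.Vector (Fin n) a) :=
        fun w => (univ.filter (fun u => ∀ j, ¬ (w j <+: u.toList))) with hS
      have hcS : ∀ w : ↥(PR n L'), c ≤ (S w.1).card := by
        intro w
        have hwlen : ∀ j, (w.1 j).length = L' j := w.2.1
        have := ext_count a w.1
        have hrw : ∑ j, n ^ (a - (w.1 j).length) = ∑ j, n ^ (a - L' j) := by
          refine Finset.sum_congr rfl fun j _ => by rw [hwlen j]
        rw [hrw] at this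
        exact this
      set Φ : ↥(PR n L') × Fin c → ↥(PR n L) := fun p =>
        ⟨Fin.snoc p.1.1 ((S p.1.1).equivFin.symm (Fin.castLE (hcS p.1) p.2)).1.toList, by
          apply snoc_mem_PR hmono hL p.1.2
          · exact List.Vector.toList_length _
          · have hmem := ((S p.1.1).equivFin.symm (Fin.castLE (hcS p.1) p.2)).2
            exact (Finset.mem_filter.1 hmem).2⟩ with hΦ
      have hΦinj : Function.Injective Φ := by
        intro p q h
        obtain ⟨w, t⟩ := p
        obtain ⟨w', t'⟩ := q
        have h1 : (Φ (w, t)).1 = (Φ (w', t')).1 := congrArg Subtype.val h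
        simp only [hΦ] at h1
        have hinit : w.1 = w'.1 := by
          have := congrArg Fin.init h1
          rwa [Fin.init_snoc, Fin.init_snoc] at this
        have hw : w = w' := Subtype.ext hinit
        subst hw
        have hlast := congrArg (fun f => f (Fin.last m)) h1
        simp only [Fin.snoc_last] at hlast
        have h2 : ((S w.1).equivFin.symm (Fin.castLE (hcS w) t))
            = ((S w.1).equivFin.symm (Fin.castLE (hcS w) t')) :=
          Subtype.ext (Subtype.ext hlast)
        have h3 := (S w.1).equivFin.symm.injective h2
        have h4 := Fin.castLE_injective _ h3
        rw [h4]
      calc (Nat.card ↥(PR n L')) * c = Nat.card (↥(PR n L') × Fin c) := by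
            rw [Nat.card_prod]
            simp
        _ ≤ Nat.card ↥(PR n L) := Nat.card_le_card_of_injective Φ hΦinj
    calc (∏ i : Fin m, (n ^ L' i - ∑ j ∈ Finset.Iio i, n ^ (L' i - L' j))) * c
        ≤ (Nat.card ↥(PR n L')) * c := Nat.mul_le_mul_right c (ih L' hmono' hL1')
      _ ≤ Nat.card ↥(PR n L) := hkey

lemma isUD_comp {X : Type*} {m : ℕ} {v : Fin m → List X} (hv : IsUDCode v)
    (σ : Equiv.Perm (Fin m)) : IsUDCode (v ∘ σ) := by
  intro s t hs ht h
  have hs' : (s.map σ).map v = s.map (v ∘ σ) := by rw [List.map_map]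
  have ht' : (t.map σ).map v = t.map (v ∘ σ) := by rw [List.map_map]
  have := hv (s.map σ) (t.map σ) (by simpa using hs) (by simpa using ht)
    (by rw [hs', ht']; exact h)
  exact (List.map_injective_iff.2 σ.injective) this

lemma isPrefix_comp {X : Type*} {m : ℕ} {v : Fin m → List X} (hv : IsPrefixCode v)
    (σ : Equiv.Perm (Fin m)) : IsPrefixCode (v ∘ σ) := by
  obtain ⟨hinj, hne, hpre⟩ := hv
  exact ⟨hinj.comp σ.injective, fun i => hne _,
    fun i j hij => hpre _ _ (fun h => hij (σ.injective h))⟩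

lemma UD_comp_eq (n : ℕ) {m : ℕ} (L : Fin m → ℕ) (σ : Equiv.Perm (Fin m)) :
    UD n (L ∘ σ) = (fun v => v ∘ σ) '' (UD n L) := by
  ext w
  constructor
  · intro ⟨hlen, hud⟩
    refine ⟨w ∘ σ.symm, ⟨fun i => ?_, isUD_comp hud σ.symm⟩, ?_⟩
    · have := hlen (σ.symm i)
      simpa using this
    · funext i; simp
  · rintro ⟨v, ⟨hlen, hud⟩, rfl⟩
    exact ⟨fun i => hlen (σ i), isUD_comp hud σ⟩

lemma PR_comp_eq (n : ℕ) {m : ℕ} (L : Fin m → ℕ) (σ : Equiv.Perm (Fin m)) :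
    PR n (L ∘ σ) = (fun v => v ∘ σ) '' (PR n L) := by
  ext w
  constructor
  · intro ⟨hlen, hpc⟩
    refine ⟨w ∘ σ.symm, ⟨fun i => ?_, isPrefix_comp hpc σ.symm⟩, ?_⟩
    · have := hlen (σ.symm i)
      simpa using this
    · funext i; simp
  · rintro ⟨v, ⟨hlen, hpc⟩, rfl⟩
    exact ⟨fun i => hlen (σ i), isPrefix_comp hpc σ⟩

lemma comp_perm_injective {X : Type*} {m : ℕ} (σ : Equiv.Perm (Fin m)) :
    Function.Injective (fun v : Fin m → X => v ∘ σ) := by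
  intro v v' h
  funext i
  have := congrFun h (σ.symm i)
  simpa using this

lemma UD_comp_ncard (n : ℕ) {m : ℕ} (L : Fin m → ℕ) (σ : Equiv.Perm (Fin m)) :
    (UD n (L ∘ σ)).ncard = (UD n L).ncard := by
  rw [UD_comp_eq, Set.ncard_image_of_injective _ (comp_perm_injective σ)]

lemma PR_comp_ncard (n : ℕ) {m : ℕ} (L : Fin m → ℕ) (σ : Equiv.Perm (Fin m)) :
    (PR n (L ∘ σ)).ncard = (PR n L).ncard := by
  rw [PR_comp_eq, Set.ncard_image_of_injective _ (comp_perm_injective σ)]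

lemma codes_card (n : ℕ) {m : ℕ} (L : Fin m → ℕ) :
    Nat.card ↥{v : Fin m → List (Fin n) | ∀ i, (v i).length = L i} = ∏ i, n ^ L i := by
  have e : ↥{v : Fin m → List (Fin n) | ∀ i, (v i).length = L i}
      ≃ ∀ i, List.Vector (Fin n) (L i) :=
    { toFun := fun v i => ⟨v.1 i, v.2 i⟩
      invFun := fun f => ⟨fun i => (f i).1, fun i => (f i).2⟩
      left_inv := fun v => rfl
      right_inv := fun f => rfl }
  rw [Nat.card_congr e, Nat.card_eq_fintype_card, Fintype.card_pi]
  exact Finset.prod_congr rfl fun i _ => by rw [card_vector, Fintype.card_fin]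

end Aux

/-- Theorem 2 (first part): for `L ∈ ℒ_{n,m}`, `ρ_{n,L} ≥ q_{n,m}·ς_{n,m}^{m-1}`. -/
theorem stmt1 (n m : ℕ) (hn : 2 ≤ n) (hm : 1 ≤ m) (L : Fin m → ℕ)
    (hL : ∀ i, 1 ≤ L i) (hud : (UD n L).Nonempty) :
    qnm n m * varsigma n m ^ (m - 1) ≤ rho n L := by
  classical
  obtain ⟨m', rfl⟩ : ∃ m', m = m' + 1 := ⟨m - 1, by omega⟩
  have hn1 : 1 ≤ n := by omega
  have hn0 : (0:ℝ) < (n:ℝ) := by positivity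
  have hnz : (n:ℝ) ≠ 0 := ne_of_gt hn0
  set σ := Tuple.sort L with hσ
  set L' : Fin (m'+1) → ℕ := L ∘ σ with hL'def
  have hmono : Monotone L' := Tuple.monotone_sort L
  have hud' : (UD n L').Nonempty := by
    rw [hL'def, UD_comp_eq]
    exact hud.image _
  have hrho : rho n L = rho n L' := by
    rw [rho, rho, hL'def, UD_comp_ncard, PR_comp_ncard]
  rw [hrho]
  have hL1 : ∀ i, 1 ≤ L' i := fun i => hL _
  obtain ⟨v, hvlen, hvud⟩ := hud'
  have hkraft : ∑ i, ((n:ℝ)^(L' i))⁻¹ ≤ 1 := kraft_le_one hn1 hvlen hvud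
  set ς := varsigma n (m'+1) with hςdef
  have hς0 : 0 < ς := varsigma_pos hn _
  set K : Fin (m'+1) → ℝ := fun i => ∑ j ∈ Finset.Iio i, ((n:ℝ)^(L' j))⁻¹ with hKdef
  have hfac : ∀ i : Fin (m'+1), ς ≤ 1 - K i := by
    intro i
    have hterm : (0:ℝ) < ((n:ℝ)^(L' i))⁻¹ := by positivity
    have hKlt : K i ≤ 1 - ((n:ℝ)^(L' i))⁻¹ := by
      have hsub : insert i (Finset.Iio i) ⊆ univ := Finset.subset_univ _
      have hle := Finset.sum_le_sum_of_subset_of_nonneg hsub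
        (fun j _ _ => by positivity : ∀ j ∈ univ, j ∉ insert i (Finset.Iio i) →
          (0:ℝ) ≤ ((n:ℝ)^(L' j))⁻¹)
      rw [Finset.sum_insert (by simp)] at hle
      have : K i + ((n:ℝ)^(L' i))⁻¹ ≤ 1 := le_trans (le_of_eq (by rw [hKdef]; ring))
        (le_trans hle hkraft)
      linarith
    have hKlt1 : K i < 1 := by linarith
    have h2 := defic hn (fun j => L' j) (Finset.Iio i) (by rw [hKdef] at hKlt1; exact hKlt1)
    rw [Fin.card_Iio] at h2
    have h3 : ς ≤ varsigma n i.val := varsigma_antitone hn (le_of_lt i.isLt)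
    rw [hKdef]
    linarith
  set N : ℝ := ∏ i, (n:ℝ)^(L' i) with hNdef
  have hN0 : 0 < N := Finset.prod_pos (fun i _ => by positivity)
  set R : ℝ := ∏ i, (1 - K i) with hRdef
  have hci : ∀ i : Fin (m'+1), (n:ℝ)^(L' i) * (1 - K i)
      ≤ ((n ^ L' i - ∑ j ∈ Finset.Iio i, n ^ (L' i - L' j) : ℕ) : ℝ) := by
    intro i
    have hexp : (n:ℝ)^(L' i) * (1 - K i)
        = (n:ℝ)^(L' i) - ∑ j ∈ Finset.Iio i, (n:ℝ)^(L' i - L' j) := by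
      rw [hKdef, mul_sub, mul_one, Finset.mul_sum]
      congr 1
      refine Finset.sum_congr rfl fun j hj => ?_
      have hle : L' j ≤ L' i := hmono (le_of_lt (Finset.mem_Iio.1 hj))
      rw [pow_sub₀ _ hnz hle]
    rw [hexp]
    have hcast1 : ((∑ j ∈ Finset.Iio i, n ^ (L' i - L' j) : ℕ) : ℝ)
        = ∑ j ∈ Finset.Iio i, (n:ℝ)^(L' i - L' j) := by push_cast; rfl
    rcases le_or_gt (∑ j ∈ Finset.Iio i, n ^ (L' i - L' j)) (n ^ L' i) with hle | hlt
    · rw [Nat.cast_sub hle, hcast1]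
      push_cast
      exact le_refl _
    · rw [Nat.sub_eq_zero_of_le hlt.le, Nat.cast_zero]
      have : ((n ^ L' i : ℕ) : ℝ) < ((∑ j ∈ Finset.Iio i, n ^ (L' i - L' j) : ℕ) : ℝ) :=
        Nat.cast_lt.2 hlt
      rw [hcast1] at this
      push_cast at this
      linarith
  have hPRbound : N * R ≤ ((PR n L').ncard : ℝ) := by
    calc N * R = ∏ i, ((n:ℝ)^(L' i) * (1 - K i)) := by
          rw [hNdef, hRdef, Finset.prod_mul_distrib]
      _ ≤ ∏ i, ((n ^ L' i - ∑ j ∈ Finset.Iio i, n ^ (L' i - L' j) : ℕ) : ℝ) := by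
          apply Finset.prod_le_prod
          · intro i _
            have := hfac i
            have hp : (0:ℝ) < (n:ℝ)^(L' i) := by positivity
            nlinarith
          · intro i _
            exact hci i
      _ = ((∏ i, (n ^ L' i - ∑ j ∈ Finset.Iio i, n ^ (L' i - L' j)) : ℕ) : ℝ) := by
          push_cast; rfl
      _ ≤ ((Nat.card ↥(PR n L') : ℕ) : ℝ) :=
          Nat.cast_le.2 (pr_count n (m'+1) L' hmono hL1)
      _ = ((PR n L').ncard : ℝ) := by rw [Nat.card_coe_set_eq]
  have hUle : ((UD n L').ncard : ℝ) ≤ N := by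
    have h1 : (UD n L').ncard ≤ {v : Fin (m'+1) → List (Fin n) | ∀ i, (v i).length = L' i}.ncard :=
      Set.ncard_le_ncard (fun v hv => hv.1) (codes_finite n (m'+1) L')
    have h2 : {v : Fin (m'+1) → List (Fin n) | ∀ i, (v i).length = L' i}.ncard
        = ∏ i, n ^ L' i := by
      rw [← Nat.card_coe_set_eq, codes_card]
    rw [h2] at h1
    calc ((UD n L').ncard : ℝ) ≤ ((∏ i, n ^ L' i : ℕ) : ℝ) := Nat.cast_le.2 h1
      _ = N := by rw [hNdef]; push_cast; rfl
  have hU1 : 1 ≤ (UD n L').ncard :=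
    (Set.ncard_pos (UD_finite n (m'+1) L')).2 ⟨v, hvlen, hvud⟩
  have hU0 : (0:ℝ) < ((UD n L').ncard : ℝ) := by exact_mod_cast hU1
  have hR : ς ^ m' ≤ R := by
    have hK0 : K 0 = 0 := by
      rw [hKdef]
      have : Finset.Iio (0 : Fin (m'+1)) = ∅ := by
        ext k
        simp [Finset.mem_Iio]
      simp [this]
    have hcard : (Finset.univ.erase (0 : Fin (m'+1))).card = m' := by
      rw [Finset.card_erase_of_mem (Finset.mem_univ _), Finset.card_univ, Fintype.card_fin]
      omega
    calc ς ^ m' = ∏ _i ∈ Finset.univ.erase (0 : Fin (m'+1)), ς := by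
          rw [Finset.prod_const, hcard]
      _ ≤ ∏ i ∈ Finset.univ.erase (0 : Fin (m'+1)), (1 - K i) :=
          Finset.prod_le_prod (fun i _ => hς0.le) (fun i _ => hfac i)
      _ = (1 - K 0) * ∏ i ∈ Finset.univ.erase (0 : Fin (m'+1)), (1 - K i) := by
          rw [hK0]; ring
      _ = R := by
          rw [hRdef]
          exact Finset.mul_prod_erase univ (fun i => 1 - K i) (Finset.mem_univ 0)
  have hq1 : qnm n (m'+1) ≤ 1 := by
    rw [qnm]
    split_ifs with h
    · exact le_refl _
    · have hm2 : 2 ≤ m' := by omega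
      have hd0 : (0:ℝ) < (((m'+1-1 : ℕ)):ℝ) ^ (m'+1-1) := by
        have : (0:ℝ) < ((m'+1-1 : ℕ) : ℝ) := by
          simp only [Nat.add_sub_cancel]
          exact_mod_cast (by omega : 0 < m')
        positivity
      rw [div_le_one hd0]
      exact_mod_cast Nat.factorial_le_pow _
  have hq0 : 0 ≤ qnm n (m'+1) := by
    rw [qnm]
    split_ifs with h
    · norm_num
    · positivity
  have hdiv : R ≤ ((PR n L').ncard : ℝ) / ((UD n L').ncard : ℝ) := by
    have h5 : (N * R) / N ≤ ((PR n L').ncard : ℝ) / ((UD n L').ncard : ℝ) :=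
      div_le_div₀ (by positivity) hPRbound hU0 hUle
    rwa [mul_div_cancel_left₀ _ (ne_of_gt hN0)] at h5
  rw [rho]
  calc qnm n (m'+1) * ς ^ (m'+1-1) = qnm n (m'+1) * ς ^ m' := by norm_num
    _ ≤ 1 * ς ^ m' := mul_le_mul_of_nonneg_right hq1 (pow_nonneg hς0.le _)
    _ = ς ^ m' := one_mul _
    _ ≤ R := hR
    _ ≤ ((PR n L').ncard : ℝ) / ((UD n L').ncard : ℝ) := hdiv
end

section
/- For all integers n ≥ 2 and m ≥ 1, the infimum ξ_{n,m} = inf over L ∈ ℒ_{n,m} of ρ_{n,L} satisfies ξ_{n,m} ≥ q_{n,m} · ς_{n,m}^{m−1}; in particular ξ_{n,m} > 0. -/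
open Finset Filter Topology

open Finset Filter Topology

/-- Finset of words of length `ℓ` over `Fin n`. -/
noncomputable def wordsF (n ℓ : ℕ) : Finset (List (Fin n)) :=
  (Finset.univ : Finset (Fin ℓ → Fin n)).image List.ofFn

lemma mem_wordsF {n ℓ : ℕ} {w : List (Fin n)} : w ∈ wordsF n ℓ ↔ w.length = ℓ := by
  constructor
  · rintro hw
    simp only [wordsF, Finset.mem_image] at hw
    obtain ⟨f, -, rfl⟩ := hw
    simp
  · rintro rfl
    simp only [wordsF, Finset.mem_image]
    exact ⟨w.get, Finset.mem_univ _, List.ofFn_get w⟩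

lemma card_wordsF {n ℓ : ℕ} : (wordsF n ℓ).card = n ^ ℓ := by
  rw [wordsF, Finset.card_image_of_injective _ List.ofFn_injective]
  simp

lemma prefixcode_isUD {X : Type*} {m : ℕ} {v : Fin m → List X} (h : IsPrefixCode v) :
    IsUDCode v := by
  obtain ⟨hinj, hne, hpre⟩ := h
  intro s
  induction s with
  | nil => intro t hs; exact absurd rfl hs
  | cons i s ih =>
    rintro (_ | ⟨j, t⟩) hs ht hflat
    · exact absurd rfl ht
    · simp only [List.map_cons, List.flatten_cons] at hflat
      have hij : i = j := by
        by_contra hne'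
        have h1 : v i <+: v j ++ (t.map v).flatten := hflat ▸ List.prefix_append _ _
        have h2 : v j <+: v j ++ (t.map v).flatten := List.prefix_append _ _
        rcases List.prefix_or_prefix_of_prefix h1 h2 with hp | hp
        · exact hpre i j hne' hp
        · exact hpre j i (Ne.symm hne') hp
      subst hij
      have htail : (s.map v).flatten = (t.map v).flatten :=
        List.append_cancel_left hflat
      rcases eq_or_ne s [] with rfl | hs'
      · rcases eq_or_ne t [] with rfl | ht'
        · rfl
        · exfalso
          obtain ⟨k, t', rfl⟩ := List.exists_cons_of_ne_nil ht'
          simp only [List.map_cons, List.flatten_cons] at htail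
          simp only [List.map_cons, List.flatten_cons, List.map_nil, List.flatten_nil] at htail
          exact hne k (List.append_eq_nil_iff.mp htail.symm).1
      · rcases eq_or_ne t [] with rfl | ht'
        · exfalso
          obtain ⟨k, s', rfl⟩ := List.exists_cons_of_ne_nil hs'
          simp only [List.map_cons, List.flatten_cons, List.map_nil, List.flatten_nil] at htail
          exact hne k (List.append_eq_nil_iff.mp htail).1
        · rw [ih t hs' ht' htail]

variable {n : ℕ}

lemma vs_pos (hn : 2 ≤ n) (t : ℕ) : 0 < varsigma n t := by
  have h : (t % (n-1)) < n - 1 := Nat.mod_lt _ (by omega)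
  have h1 : ((t % (n-1) : ℕ) : ℝ) < (n : ℝ) := by exact_mod_cast (by omega : t % (n-1) < n)
  have h2 : (0:ℝ) < (n:ℝ) ^ (t / (n-1) + 1) := by positivity
  exact div_pos (by linarith) h2

lemma vs_le (hn : 2 ≤ n) (t : ℕ) : varsigma n t ≤ ((1:ℝ)/n) ^ (t / (n-1)) := by
  have hn0 : (0:ℝ) < (n:ℝ) := by positivity
  rw [varsigma, div_pow, one_pow, div_le_div_iff₀ (by positivity) (by positivity)]
  rw [pow_succ]
  have : ((t % (n-1) : ℕ) : ℝ) ≥ 0 := Nat.cast_nonneg _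
  nlinarith [pow_pos hn0 (t / (n-1))]

lemma vs_step (hn : 2 ≤ n) (t : ℕ) :
    varsigma n t = varsigma n (t+1) + ((1:ℝ)/n) ^ (t / (n-1) + 1) := by
  have hn0 : (0:ℝ) < (n:ℝ) := by positivity
  obtain ⟨k, r, hr, ht⟩ : ∃ k r, r < n - 1 ∧ t = (n-1) * k + r :=
    ⟨t / (n-1), t % (n-1), Nat.mod_lt _ (by omega), (Nat.div_add_mod t (n-1)).symm⟩
  have hmod : t % (n-1) = r := by
    rw [ht, show (n-1) * k + r = r + (n-1) * k by ring, Nat.add_mul_mod_self_left,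
      Nat.mod_eq_of_lt hr]
  have hdiv : t / (n-1) = k := by
    rw [ht, show (n-1) * k + r = r + (n-1) * k by ring,
      Nat.add_mul_div_left _ _ (by omega : 0 < n-1), Nat.div_eq_of_lt hr]
    omega
  rcases lt_or_eq_of_le (Nat.succ_le_of_lt hr) with h | h
  · have hmod1 : (t+1) % (n-1) = r + 1 := by
      rw [ht, show (n-1) * k + r + 1 = r + 1 + (n-1) * k by ring, Nat.add_mul_mod_self_left,
        Nat.mod_eq_of_lt h]
    have hdiv1 : (t+1) / (n-1) = k := by
      rw [ht, show (n-1) * k + r + 1 = r + 1 + (n-1) * k by ring,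
        Nat.add_mul_div_left _ _ (by omega : 0 < n-1), Nat.div_eq_of_lt h]
      omega
    rw [varsigma, varsigma, hmod, hdiv, hmod1, hdiv1]
    push_cast
    have hp : (0:ℝ) < (n:ℝ) ^ (k+1) := by positivity
    rw [one_div_pow]
    field_simp
    ring
  · have h' : r + 1 = n - 1 := by omega
    have hmod1 : (t+1) % (n-1) = 0 := by
      rw [ht, show (n-1) * k + r + 1 = (n-1) * (k+1) by rw [Nat.mul_succ, ← h']; ring, Nat.mul_mod_right]
    have hdiv1 : (t+1) / (n-1) = k + 1 := by
      rw [ht, show (n-1) * k + r + 1 = (n-1) * (k+1) by rw [Nat.mul_succ, ← h']; ring,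
        Nat.mul_div_cancel_left _ (by omega : 0 < n-1)]
    rw [varsigma, varsigma, hmod, hdiv, hmod1, hdiv1]
    have hrval : (r : ℝ) = (n : ℝ) - 2 := by
      have hh : r = n - 2 := by omega
      subst hh; push_cast [show 2 ≤ n from hn]; ring
    push_cast
    rw [hrval]
    have hp : (0:ℝ) < (n:ℝ) ^ (k+1) := by positivity
    rw [one_div_pow]
    field_simp
    ring

lemma vs_succ_le (hn : 2 ≤ n) (t : ℕ) : varsigma n (t+1) ≤ varsigma n t := by
  rw [vs_step hn t]
  have : (0:ℝ) < ((1:ℝ)/n) ^ (t/(n-1)+1) := by positivity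
  linarith

lemma vs_anti (hn : 2 ≤ n) {a b : ℕ} (h : a ≤ b) : varsigma n b ≤ varsigma n a := by
  induction h with
  | refl => exact le_refl _
  | step h ih => exact le_trans (vs_succ_le hn _) ih

lemma vs_le_one (hn : 2 ≤ n) (t : ℕ) : varsigma n t ≤ 1 := by
  calc varsigma n t ≤ varsigma n 0 := vs_anti hn (Nat.zero_le t)
  _ = 1 := by
    rw [varsigma]
    simp only [Nat.zero_mod, Nat.zero_div, Nat.cast_zero, sub_zero, zero_add, pow_one]
    field_simp

/-- Key numeric lemma: a sum of `t` powers `(1/n)^{b j}` (with `b j ≥ 1`) that is `< 1`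
is at most `1 - varsigma n t`. -/
lemma sum_pow_bound (hn : 2 ≤ n) {ι : Type*} [DecidableEq ι] :
    ∀ (c : ℕ) (s : Finset ι) (b : ι → ℕ), s.card = c → (∀ j ∈ s, 1 ≤ b j) →
      (∑ j ∈ s, ((1:ℝ)/n)^(b j)) < 1 →
      (∑ j ∈ s, ((1:ℝ)/n)^(b j)) + varsigma n c ≤ 1 := by
  have hn0 : (0:ℝ) < (n:ℝ) := by positivity
  intro c
  induction c with
  | zero =>
    intro s b hcard _ _
    rw [Finset.card_eq_zero.mp hcard]
    simp only [Finset.sum_empty, zero_add]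
    calc varsigma n 0 ≤ 1 := vs_le_one hn 0
  | succ c ih =>
    intro s b hcard hb hlt
    have hne : s.Nonempty := Finset.card_pos.mp (by omega)
    obtain ⟨j₀, hj₀, hmax⟩ := Finset.exists_max_image s b hne
    set B := b j₀ with hB
    have hsplit : ∑ j ∈ s, ((1:ℝ)/n)^(b j)
        = ((1:ℝ)/n)^B + ∑ j ∈ s.erase j₀, ((1:ℝ)/n)^(b j) :=
      (Finset.add_sum_erase s _ hj₀).symm
    have hcard' : (s.erase j₀).card = c := by
      rw [Finset.card_erase_of_mem hj₀, hcard]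
      omega
    have hS'lt : (∑ j ∈ s.erase j₀, ((1:ℝ)/n)^(b j)) < 1 := by
      have hpos : (0:ℝ) < ((1:ℝ)/n)^B := by positivity
      linarith [hsplit]
    have hIH := ih (s.erase j₀) b hcard' (fun j hj => hb j (Finset.mem_of_mem_erase hj)) hS'lt
    rcases le_or_gt (c / (n-1) + 1) B with hcase | hcase
    · -- B large
      have hpow : ((1:ℝ)/n)^B ≤ ((1:ℝ)/n)^(c/(n-1)+1) := by
        apply pow_le_pow_of_le_one (by positivity) (by
          rw [div_le_one hn0]; exact_mod_cast (by omega : 1 ≤ n)) hcase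
      have := vs_step hn c
      rw [hsplit]
      linarith
    · -- B small: use integrality
      have hBle : B ≤ c / (n-1) := by omega
      -- integrality: sum * n^B is a natural number
      have hint : (∑ j ∈ s, ((1:ℝ)/n)^(b j)) * (n:ℝ)^B
          = ((∑ j ∈ s, n ^ (B - b j) : ℕ) : ℝ) := by
        push_cast
        rw [Finset.sum_mul]
        apply Finset.sum_congr rfl
        intro j hj
        have hle : b j ≤ B := hmax j hj
        have : (n:ℝ) ^ (B - b j) * (n:ℝ) ^ (b j) = (n:ℝ) ^ B := by
          rw [← pow_add, Nat.sub_add_cancel hle]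
        rw [div_pow, one_pow]
        field_simp
        linarith [this]
      set M : ℕ := ∑ j ∈ s, n ^ (B - b j) with hM
      have hMlt : (M : ℝ) < (n:ℝ)^B := by
        rw [← hint]
        calc (∑ j ∈ s, ((1:ℝ)/n)^(b j)) * (n:ℝ)^B < 1 * (n:ℝ)^B := by
              apply mul_lt_mul_of_pos_right hlt (by positivity)
        _ = (n:ℝ)^B := one_mul _
      have hMlt' : M < n ^ B := by exact_mod_cast (by push_cast; exact hMlt : (M:ℝ) < ((n^B : ℕ) : ℝ))
      have hMle : M ≤ n ^ B - 1 := by omega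
      have hSle : (∑ j ∈ s, ((1:ℝ)/n)^(b j)) ≤ 1 - ((1:ℝ)/n)^B := by
        have hpB : (0:ℝ) < (n:ℝ)^B := by positivity
        rw [← mul_le_mul_iff_of_pos_right hpB, hint]
        have : ((M:ℝ)) ≤ ((n:ℝ)^B - 1) := by
          have : ((n^B - 1 : ℕ) : ℝ) = (n:ℝ)^B - 1 := by
            push_cast [Nat.one_le_iff_ne_zero.mpr (pow_ne_zero B (by omega : n ≠ 0))]
            ring
          calc (M:ℝ) ≤ ((n^B - 1 : ℕ) : ℝ) := by exact_mod_cast hMle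
          _ = (n:ℝ)^B - 1 := this
        calc (M:ℝ) ≤ (n:ℝ)^B - 1 := this
        _ = (1 - ((1:ℝ)/n)^B) * (n:ℝ)^B := by
            rw [div_pow, one_pow]; field_simp
      have hvs : varsigma n (c+1) ≤ ((1:ℝ)/n)^B := by
        calc varsigma n (c+1) ≤ ((1:ℝ)/n) ^ ((c+1) / (n-1)) := vs_le hn (c+1)
        _ ≤ ((1:ℝ)/n) ^ B := by
            apply pow_le_pow_of_le_one (by positivity) (by
              rw [div_le_one hn0]; exact_mod_cast (by omega : 1 ≤ n))
            exact le_trans hBle (Nat.div_le_div_right (by omega))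
      linarith

lemma flatten_len {n m : ℕ} {v : Fin m → List (Fin n)} {L : Fin m → ℕ}
    (hlen : ∀ i, (v i).length = L i) {t : ℕ} (s : Fin t → Fin m) :
    (((List.ofFn s).map v).flatten).length = ∑ k, L (s k) := by
  rw [List.length_flatten, List.map_map, List.map_ofFn, List.sum_ofFn]
  simp [Function.comp_def, hlen]

lemma kraft_ineq {n m : ℕ} (hn : 2 ≤ n) {L : Fin m → ℕ} {v : Fin m → List (Fin n)}
    (hlen : ∀ i, (v i).length = L i) (hud : IsUDCode v) :
    ∑ i, ((1:ℝ)/n)^(L i) ≤ 1 := by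
  have hn0 : (0:ℝ) < (n:ℝ) := by positivity
  set K : ℝ := ∑ i, ((1:ℝ)/n)^(L i) with hK
  have hK0 : 0 ≤ K := Finset.sum_nonneg (fun i _ => by positivity)
  set A : ℕ := Finset.univ.sup L with hA
  have key : ∀ t : ℕ, 1 ≤ t → K ^ t ≤ t * A + 1 := by
    intro t ht
    have h1 : K ^ t = ∑ s : Fin t → Fin m, ((1:ℝ)/n) ^ (∑ k, L (s k)) := by
      rw [hK, show (∑ i, ((1:ℝ)/n)^(L i)) ^ t = ∏ _k : Fin t, (∑ i, ((1:ℝ)/n)^(L i)) by simp,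
        Finset.prod_univ_sum]
      simp only [Fintype.piFinset_univ]
      exact Finset.sum_congr rfl fun s _ => Finset.prod_pow_eq_pow_sum _ _ _
    have h2 : ∑ s : Fin t → Fin m, ((1:ℝ)/n) ^ (∑ k, L (s k))
        = ∑ ℓ ∈ (Finset.univ.image fun s : Fin t → Fin m => ∑ k, L (s k)),
            ((Finset.univ.filter fun s : Fin t → Fin m => (∑ k, L (s k)) = ℓ).card : ℝ)
              * ((1:ℝ)/n) ^ ℓ := by
      rw [Finset.sum_comp (fun ℓ => ((1:ℝ)/n) ^ ℓ) (fun s : Fin t → Fin m => ∑ k, L (s k))]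
      simp [nsmul_eq_mul]
    -- each fiber has card ≤ n ^ ℓ
    have h3 : ∀ ℓ : ℕ, ((Finset.univ.filter fun s : Fin t → Fin m => (∑ k, L (s k)) = ℓ).card : ℝ)
        * ((1:ℝ)/n) ^ ℓ ≤ 1 := by
      intro ℓ
      have hcard : (Finset.univ.filter fun s : Fin t → Fin m => (∑ k, L (s k)) = ℓ).card
          ≤ n ^ ℓ := by
        rw [← card_wordsF (n := n) (ℓ := ℓ)]
        apply Finset.card_le_card_of_injOn (fun s => ((List.ofFn s).map v).flatten)
        · intro s hs
          rw [Finset.mem_coe, Finset.mem_filter] at hs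
          rw [Finset.mem_coe, mem_wordsF, flatten_len hlen s, hs.2]
        · intro s hs s' hs' heq
          have hne : (List.ofFn s) ≠ [] := by
            simp [List.ofFn_eq_nil_iff]; omega
          have hne' : (List.ofFn s') ≠ [] := by
            simp [List.ofFn_eq_nil_iff]; omega
          have := hud _ _ hne hne' heq
          exact List.ofFn_injective this
      calc ((Finset.univ.filter fun s : Fin t → Fin m => (∑ k, L (s k)) = ℓ).card : ℝ)
            * ((1:ℝ)/n) ^ ℓ ≤ (n ^ ℓ : ℕ) * ((1:ℝ)/n) ^ ℓ := by
            apply mul_le_mul_of_nonneg_right (by exact_mod_cast hcard) (by positivity)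
      _ = 1 := by
            push_cast
            rw [div_pow, one_pow]
            field_simp
    have h4 : (Finset.univ.image fun s : Fin t → Fin m => ∑ k, L (s k)).card ≤ t * A + 1 := by
      have hsub : (Finset.univ.image fun s : Fin t → Fin m => ∑ k, L (s k))
          ⊆ Finset.range (t * A + 1) := by
        intro ℓ hℓ
        rw [Finset.mem_image] at hℓ
        obtain ⟨s, -, rfl⟩ := hℓ
        rw [Finset.mem_range]
        have : ∑ k, L (s k) ≤ ∑ _k : Fin t, A :=
          Finset.sum_le_sum fun k _ => Finset.le_sup (Finset.mem_univ _)
        simp only [Finset.sum_const, Finset.card_univ, Fintype.card_fin, smul_eq_mul] at this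
        omega
      calc _ ≤ (Finset.range (t * A + 1)).card := Finset.card_le_card hsub
      _ = t * A + 1 := Finset.card_range _
    calc K ^ t = _ := h1
    _ = _ := h2
    _ ≤ ∑ _ℓ ∈ (Finset.univ.image fun s : Fin t → Fin m => ∑ k, L (s k)), (1:ℝ) :=
        Finset.sum_le_sum fun ℓ _ => h3 ℓ
    _ = ((Finset.univ.image fun s : Fin t → Fin m => ∑ k, L (s k)).card : ℝ) := by
        rw [Finset.sum_const]; simp
    _ ≤ t * A + 1 := by exact_mod_cast h4
  -- conclude K ≤ 1
  by_contra hlt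
  push_neg at hlt
  set d : ℝ := K - 1 with hd
  have hd0 : 0 < d := by linarith
  obtain ⟨t, ht1, htx⟩ : ∃ t : ℕ, 1 ≤ t ∧ (2 * (A:ℝ) + 1) / d^2 ≤ t :=
    ⟨⌈(2 * (A:ℝ) + 1) / d^2⌉₊ + 1, by omega,
      le_trans (Nat.le_ceil _) (Nat.cast_le.mpr (Nat.le_succ _))⟩
  have hb : 1 + (t:ℝ) * d ≤ K ^ t := by
    have := one_add_mul_le_pow (by linarith : (-2:ℝ) ≤ d) t
    calc 1 + (t:ℝ) * d ≤ (1 + d) ^ t := this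
    _ = K ^ t := by rw [hd]; ring_nf
  have hsq : (1 + (t:ℝ) * d)^2 ≤ K ^ (t * 2) := by
    rw [pow_mul]
    apply pow_le_pow_left₀ (by positivity) hb
  have hup : K ^ (t * 2) ≤ (t * 2 : ℕ) * A + 1 := key (t * 2) (by omega)
  have hexp : (1 + (t:ℝ) * d)^2 = 1 + 2 * t * d + t^2 * d^2 := by ring
  have htd : (t:ℝ)^2 * d^2 ≤ 2 * t * A := by
    push_cast at hup
    nlinarith [mul_nonneg (Nat.cast_nonneg t) hd0.le, hsq, hup, hexp]
  have htpos : (0:ℝ) < t := by exact_mod_cast ht1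
  have h2A : (t:ℝ) * d^2 ≤ 2 * A := by
    nlinarith
  have : (2 * (A:ℝ) + 1) ≤ t * d^2 := by
    rw [div_le_iff₀ (by positivity)] at htx
    linarith
  linarith

noncomputable def codesF (n : ℕ) {m : ℕ} (L : Fin m → ℕ) : Finset (Fin m → List (Fin n)) :=
  Fintype.piFinset (fun i => wordsF n (L i))

lemma mem_codesF {n m : ℕ} {L : Fin m → ℕ} {v} :
    v ∈ codesF n L ↔ ∀ i, (v i).length = L i := by
  simp [codesF, Fintype.mem_piFinset, mem_wordsF]

lemma card_codesF {n m : ℕ} {L : Fin m → ℕ} :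
    (codesF n L).card = ∏ i, n ^ (L i) := by
  rw [codesF, Fintype.card_piFinset]
  exact Finset.prod_congr rfl fun i _ => card_wordsF

noncomputable def PRF (n : ℕ) {m : ℕ} (L : Fin m → ℕ) : Finset (Fin m → List (Fin n)) :=
  @Finset.filter _ (fun v => IsPrefixCode v) (Classical.decPred _) (codesF n L)

lemma mem_PRF {n m : ℕ} {L : Fin m → ℕ} {v} :
    v ∈ PRF n L ↔ (∀ i, (v i).length = L i) ∧ IsPrefixCode v := by
  simp only [PRF, Finset.filter_congr_decidable, Finset.mem_filter, mem_codesF]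

/-- Valid extensions of a prefix code by one word of length `ℓ`. -/
noncomputable def extF (n : ℕ) {m : ℕ} (ℓ : ℕ) (u : Fin m → List (Fin n)) :
    Finset (List (Fin n)) :=
  (wordsF n ℓ).filter (fun w => ∀ j, ¬ u j <+: w ∧ ¬ w <+: u j)

lemma mem_extF {n m ℓ : ℕ} {u : Fin m → List (Fin n)} {w} :
    w ∈ extF n ℓ u ↔ w.length = ℓ ∧ ∀ j, ¬ u j <+: w ∧ ¬ w <+: u j := by
  rw [extF, Finset.mem_filter, mem_wordsF]

lemma extF_card {n m ℓ : ℕ} {u : Fin m → List (Fin n)} {L' : Fin m → ℕ}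
    (hu : ∀ j, (u j).length = L' j) (hle : ∀ j, L' j ≤ ℓ) :
    n ^ ℓ ≤ (extF n ℓ u).card + ∑ j : Fin m, n ^ (ℓ - L' j) := by
  classical
  have hsub : wordsF n ℓ ⊆ extF n ℓ u ∪
      Finset.univ.biUnion (fun j => (wordsF n ℓ).filter (fun w => u j <+: w)) := by
    intro w hw
    by_cases h : ∀ j, ¬ u j <+: w
    · apply Finset.mem_union_left
      rw [mem_extF]
      refine ⟨mem_wordsF.mp hw, fun j => ⟨h j, fun hpre => ?_⟩⟩
      have hlen : (u j).length ≤ w.length := by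
        rw [mem_wordsF.mp hw, hu j]; exact hle j
      exact h j ((hpre.eq_of_length_le hlen) ▸ List.prefix_refl _)
    · push_neg at h
      obtain ⟨j, hj⟩ := h
      apply Finset.mem_union_right
      exact Finset.mem_biUnion.mpr ⟨j, Finset.mem_univ _, Finset.mem_filter.mpr ⟨hw, hj⟩⟩
  have hbad : ∀ j : Fin m, ((wordsF n ℓ).filter (fun w => u j <+: w)).card ≤ n ^ (ℓ - L' j) := by
    intro j
    rw [← card_wordsF (n := n) (ℓ := ℓ - L' j)]
    apply Finset.card_le_card_of_injOn (fun w => w.drop (L' j))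
    · intro w hw
      rw [Finset.mem_coe, Finset.mem_filter] at hw
      rw [Finset.mem_coe, mem_wordsF, List.length_drop, mem_wordsF.mp hw.1]
    · intro w hw w' hw' heq
      rw [Finset.mem_coe, Finset.mem_filter] at hw hw'
      obtain ⟨t, rfl⟩ := hw.2
      obtain ⟨t', rfl⟩ := hw'.2
      have h1 : (u j ++ t).drop (L' j) = t := by rw [← hu j]; exact List.drop_left
      have h2 : (u j ++ t').drop (L' j) = t' := by rw [← hu j]; exact List.drop_left
      simp only [h1, h2] at heq
      rw [heq]
  calc n ^ ℓ = (wordsF n ℓ).card := card_wordsF.symm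
  _ ≤ (extF n ℓ u ∪ Finset.univ.biUnion
        (fun j => (wordsF n ℓ).filter (fun w => u j <+: w))).card := Finset.card_le_card hsub
  _ ≤ (extF n ℓ u).card + (Finset.univ.biUnion
        (fun j => (wordsF n ℓ).filter (fun w => u j <+: w))).card := Finset.card_union_le _ _
  _ ≤ (extF n ℓ u).card + ∑ j : Fin m, ((wordsF n ℓ).filter (fun w => u j <+: w)).card := by
      exact Nat.add_le_add_left (Finset.card_biUnion_le) _
  _ ≤ (extF n ℓ u).card + ∑ j : Fin m, n ^ (ℓ - L' j) :=
      Nat.add_le_add_left (Finset.sum_le_sum fun j _ => hbad j) _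

section snoc
variable {n m : ℕ} {L : Fin (m+1) → ℕ}

lemma snoc_mem_PRF (hL1 : ∀ i, 1 ≤ L i) {u : Fin m → List (Fin n)}
    (hu : u ∈ PRF n (fun i => L i.castSucc)) {w : List (Fin n)}
    (hw : w ∈ extF n (L (Fin.last m)) u) :
    Fin.snoc u w ∈ PRF n L := by
  rw [mem_PRF] at hu ⊢
  rw [mem_extF] at hw
  obtain ⟨hulen, huinj, hune, hupre⟩ := hu
  refine ⟨?_, ?_, ?_, ?_⟩
  · intro i
    induction i using Fin.lastCases with
    | last => rw [Fin.snoc_last]; exact hw.1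
    | cast i => rw [Fin.snoc_castSucc]; exact hulen i
  · intro a b hab
    induction a using Fin.lastCases with
    | last =>
      induction b using Fin.lastCases with
      | last => rfl
      | cast b =>
        exfalso
        rw [Fin.snoc_last, Fin.snoc_castSucc] at hab
        exact (hw.2 b).2 (hab ▸ List.prefix_refl _)
    | cast a =>
      induction b using Fin.lastCases with
      | last =>
        exfalso
        rw [Fin.snoc_last, Fin.snoc_castSucc] at hab
        exact (hw.2 a).1 (hab ▸ List.prefix_refl _)
      | cast b =>
        rw [Fin.snoc_castSucc, Fin.snoc_castSucc] at hab
        rw [huinj hab]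
  · intro i
    induction i using Fin.lastCases with
    | last =>
      rw [Fin.snoc_last]
      intro hnil
      have := hw.1
      rw [hnil] at this
      simp only [List.length_nil] at this
      have := hL1 (Fin.last m)
      omega
    | cast i => rw [Fin.snoc_castSucc]; exact hune i
  · intro i j hij
    induction i using Fin.lastCases with
    | last =>
      induction j using Fin.lastCases with
      | last => exact absurd rfl hij
      | cast j => rw [Fin.snoc_last, Fin.snoc_castSucc]; exact (hw.2 j).2
    | cast i =>
      induction j using Fin.lastCases with
      | last => rw [Fin.snoc_last, Fin.snoc_castSucc]; exact (hw.2 i).1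
      | cast j =>
        rw [Fin.snoc_castSucc, Fin.snoc_castSucc]
        exact hupre i j (fun h => hij (congrArg Fin.castSucc h))

lemma PRF_eq_biUnion (hL1 : ∀ i, 1 ≤ L i) :
    PRF n L = (PRF n (fun i => L i.castSucc)).biUnion
      (fun u => (extF n (L (Fin.last m)) u).image (Fin.snoc u)) := by
  classical
  ext v
  rw [Finset.mem_biUnion]
  constructor
  · intro hv
    rw [mem_PRF] at hv
    obtain ⟨hlen, hinj, hne, hpre⟩ := hv
    refine ⟨Fin.init v, ?_, ?_⟩
    · rw [mem_PRF]
      refine ⟨fun i => hlen i.castSucc, ?_, fun i => hne _, fun i j hij => hpre _ _ ?_⟩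
      · intro a b hab
        have : a.castSucc = b.castSucc := hinj hab
        exact Fin.castSucc_injective m this
      · exact fun h => hij (Fin.castSucc_injective m h)
    · refine Finset.mem_image.mpr ⟨v (Fin.last m), ?_, Fin.snoc_init_self v⟩
      rw [mem_extF]
      refine ⟨hlen _, fun j => ⟨?_, ?_⟩⟩
      · exact hpre _ _ (Fin.ne_last_of_lt (Fin.castSucc_lt_last j))
      · exact hpre _ _ (Fin.ne_of_gt (Fin.castSucc_lt_last j))
  · rintro ⟨u, hu, hv⟩
    obtain ⟨w, hw, rfl⟩ := Finset.mem_image.mp hv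
    exact snoc_mem_PRF hL1 hu hw

lemma PRF_card_eq (hL1 : ∀ i, 1 ≤ L i) :
    (PRF n L).card = ∑ u ∈ PRF n (fun i => L i.castSucc),
      (extF n (L (Fin.last m)) u).card := by
  classical
  rw [PRF_eq_biUnion hL1, Finset.card_biUnion]
  · apply Finset.sum_congr rfl
    intro u _
    apply Finset.card_image_of_injective
    intro w w' hww'
    have h1 := congrArg (fun f => f (Fin.last m)) hww'
    simpa [Fin.snoc_last] using h1
  · intro u hu u' hu' huu'
    rw [Function.onFun, Finset.disjoint_left]
    intro v hv hv'
    obtain ⟨w, hw, rfl⟩ := Finset.mem_image.mp hv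
    obtain ⟨w', hw', heq⟩ := Finset.mem_image.mp hv'
    apply huu'
    have := congrArg Fin.init heq
    rw [Fin.init_snoc, Fin.init_snoc] at this
    exact this.symm
end snoc

/-- Reindexing partial sums over `Iio`. -/
lemma sum_Iio_castSucc {m : ℕ} (f : Fin (m+1) → ℝ) (i : Fin m) :
    ∑ j ∈ Finset.Iio (Fin.castSucc i), f j = ∑ j ∈ Finset.Iio i, f (Fin.castSucc j) := by
  have h1 : Finset.Iio (Fin.castSucc i) = Finset.univ.filter (· < Fin.castSucc i) := by
    ext j; simp only [Finset.mem_Iio, Finset.mem_filter, Finset.mem_univ, true_and]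
  have h2 : Finset.Iio i = Finset.univ.filter (· < i) := by
    ext j; simp only [Finset.mem_Iio, Finset.mem_filter, Finset.mem_univ, true_and]
  rw [h1, h2, Finset.sum_filter, Finset.sum_filter, Fin.sum_univ_castSucc]
  have hlast : ¬ (Fin.last m < Fin.castSucc i) := not_lt.mpr (Fin.le_last _)
  simp only [Fin.castSucc_lt_castSucc_iff, hlast, if_false, add_zero]

lemma sum_Iio_last {m : ℕ} (f : Fin (m+1) → ℝ) :
    ∑ j ∈ Finset.Iio (Fin.last m), f j = ∑ j : Fin m, f (Fin.castSucc j) := by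
  have h1 : Finset.Iio (Fin.last m) = Finset.univ.filter (· < Fin.last m) := by
    ext j; simp only [Finset.mem_Iio, Finset.mem_filter, Finset.mem_univ, true_and]
  rw [h1, Finset.sum_filter, Fin.sum_univ_castSucc]
  have hlast : ¬ (Fin.last m < Fin.last m) := lt_irrefl _
  simp only [Fin.castSucc_lt_last, if_true, hlast, if_false, add_zero]

/-- Main counting lower bound for prefix codes, monotone case. -/
lemma PRF_count {n : ℕ} (hn : 2 ≤ n) :
    ∀ (m : ℕ) (L : Fin m → ℕ), Monotone L → (∀ i, 1 ≤ L i) →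
    (∀ i : Fin m, ∑ j ∈ Finset.Iio i, ((1:ℝ)/n)^(L j) ≤ 1) →
    ∏ i, ((n:ℝ)^(L i) * (1 - ∑ j ∈ Finset.Iio i, ((1:ℝ)/n)^(L j))) ≤ ((PRF n L).card : ℝ)
  | 0, L, _, _, _ => by
    have hmem : (fun i : Fin 0 => (i.elim0 : List (Fin n))) ∈ PRF n L := by
      rw [mem_PRF]
      exact ⟨fun i => i.elim0, fun a => a.elim0, fun i => i.elim0, fun i => i.elim0⟩
    have : 1 ≤ (PRF n L).card := Finset.card_pos.mpr ⟨_, hmem⟩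
    calc ∏ i : Fin 0, ((n:ℝ)^(L i) * (1 - ∑ j ∈ Finset.Iio i, ((1:ℝ)/n)^(L j)))
        = 1 := by simp
    _ ≤ ((PRF n L).card : ℝ) := by exact_mod_cast this
  | (m+1), L, hmono, hL1, hsum => by
    have hn0 : (0:ℝ) < (n:ℝ) := by positivity
    set L' : Fin m → ℕ := fun i => L i.castSucc with hL'
    set ℓ : ℕ := L (Fin.last m) with hℓ
    have hle : ∀ j, L' j ≤ ℓ := fun j => hmono (Fin.le_last _)
    -- the last factor
    set Slast : ℝ := ∑ j : Fin m, ((1:ℝ)/n)^(L' j) with hSlast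
    have hSlast_eq : ∑ j ∈ Finset.Iio (Fin.last m), ((1:ℝ)/n)^(L j) = Slast :=
      sum_Iio_last _
    have hSle : Slast ≤ 1 := hSlast_eq ▸ hsum (Fin.last m)
    have hfac_nonneg : (0:ℝ) ≤ (n:ℝ)^ℓ * (1 - Slast) := by
      have : (0:ℝ) ≤ 1 - Slast := by linarith
      positivity
    -- extension count
    have hext : ∀ u ∈ PRF n L', (n:ℝ)^ℓ * (1 - Slast) ≤ ((extF n ℓ u).card : ℝ) := by
      intro u hu
      have hulen : ∀ j, (u j).length = L' j := (mem_PRF.mp hu).1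
      have hcount := extF_card (n := n) hulen hle
      have hcast : ((∑ j : Fin m, n ^ (ℓ - L' j) : ℕ) : ℝ) = (n:ℝ)^ℓ * Slast := by
        push_cast
        rw [hSlast, Finset.mul_sum]
        apply Finset.sum_congr rfl
        intro j _
        rw [div_pow, one_pow]
        have hpow : (n:ℝ) ^ (ℓ - L' j) * (n:ℝ) ^ (L' j) = (n:ℝ) ^ ℓ := by
          rw [← pow_add, Nat.sub_add_cancel (hle j)]
        field_simp
        linarith [hpow]
      have : ((n:ℝ))^ℓ ≤ ((extF n ℓ u).card : ℝ) + (n:ℝ)^ℓ * Slast := by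
        have hQ := (Nat.cast_le (α := ℝ)).mpr hcount
        rw [Nat.cast_add, hcast, Nat.cast_pow] at hQ
        push_cast at hQ ⊢
        linarith
      linarith
    -- assemble
    have hIH := PRF_count hn m L' (fun a b hab => hmono (Fin.castSucc_le_castSucc_iff.mpr hab))
      (fun i => hL1 _) (fun i => by
        rw [← sum_Iio_castSucc (fun j => ((1:ℝ)/n)^(L j)) i]
        exact hsum _)
    have hprod_nonneg : (0:ℝ) ≤ ∏ i : Fin m, ((n:ℝ)^(L' i) * (1 - ∑ j ∈ Finset.Iio i, ((1:ℝ)/n)^(L' j))) := by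
      apply Finset.prod_nonneg
      intro i _
      have h := hsum i.castSucc
      rw [sum_Iio_castSucc (fun j => ((1:ℝ)/n)^(L j)) i] at h
      have h' : (0:ℝ) ≤ 1 - ∑ j ∈ Finset.Iio i, ((1:ℝ)/n)^(L' j) := by
        simp only [hL'] at h ⊢
        linarith
      exact mul_nonneg (by positivity) h'
    calc ∏ i : Fin (m+1), ((n:ℝ)^(L i) * (1 - ∑ j ∈ Finset.Iio i, ((1:ℝ)/n)^(L j)))
        = (∏ i : Fin m, ((n:ℝ)^(L' i) * (1 - ∑ j ∈ Finset.Iio i, ((1:ℝ)/n)^(L' j))))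
          * ((n:ℝ)^ℓ * (1 - Slast)) := by
          rw [Fin.prod_univ_castSucc]
          congr 1
          · apply Finset.prod_congr rfl
            intro i _
            rw [sum_Iio_castSucc (fun j => ((1:ℝ)/n)^(L j)) i]
          · rw [hSlast_eq]
    _ ≤ ((PRF n L').card : ℝ) * ((n:ℝ)^ℓ * (1 - Slast)) :=
          mul_le_mul_of_nonneg_right hIH hfac_nonneg
    _ = ∑ _u ∈ PRF n L', ((n:ℝ)^ℓ * (1 - Slast)) := by
          rw [Finset.sum_const, nsmul_eq_mul]
    _ ≤ ∑ u ∈ PRF n L', ((extF n ℓ u).card : ℝ) := Finset.sum_le_sum hext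
    _ = ((PRF n L).card : ℝ) := by
          rw [PRF_card_eq hL1]
          norm_cast


/-! ### Assembly -/

noncomputable def UDF (n : ℕ) {m : ℕ} (L : Fin m → ℕ) : Finset (Fin m → List (Fin n)) :=
  @Finset.filter _ (fun v => IsUDCode v) (Classical.decPred _) (codesF n L)

lemma mem_UDF {n m : ℕ} {L : Fin m → ℕ} {v} :
    v ∈ UDF n L ↔ (∀ i, (v i).length = L i) ∧ IsUDCode v := by
  simp only [UDF, Finset.filter_congr_decidable, Finset.mem_filter, mem_codesF]

lemma UD_eq_coe {n m : ℕ} {L : Fin m → ℕ} : UD n L = ↑(UDF n L) := by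
  ext v
  rw [Finset.mem_coe, mem_UDF]
  rfl

lemma PR_eq_coe {n m : ℕ} {L : Fin m → ℕ} : PR n L = ↑(PRF n L) := by
  ext v
  rw [Finset.mem_coe, mem_PRF]
  rfl

lemma rho_eq {n m : ℕ} {L : Fin m → ℕ} :
    rho n L = ((PRF n L).card : ℝ) / ((UDF n L).card : ℝ) := by
  rw [rho, PR_eq_coe, UD_eq_coe, Set.ncard_coe_finset, Set.ncard_coe_finset]

lemma isPrefixCode_comp {X : Type*} {m : ℕ} {v : Fin m → List X} (σ : Equiv.Perm (Fin m))
    (h : IsPrefixCode v) : IsPrefixCode (v ∘ σ) :=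
  ⟨h.1.comp σ.injective, fun i => h.2.1 _, fun i j hij => h.2.2 _ _ (fun e => hij (σ.injective e))⟩

lemma PRF_perm_card {n m : ℕ} (L : Fin m → ℕ) (σ : Equiv.Perm (Fin m)) :
    (PRF n (L ∘ σ)).card = (PRF n L).card := by
  apply Finset.card_bij' (fun w _ => w ∘ σ.symm) (fun v _ => v ∘ σ)
  · intro w hw
    rw [mem_PRF] at hw ⊢
    refine ⟨fun i => ?_, isPrefixCode_comp σ.symm hw.2⟩
    have := hw.1 (σ.symm i)
    simpa using this
  · intro v hv
    rw [mem_PRF] at hv ⊢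
    exact ⟨fun i => hv.1 _, isPrefixCode_comp σ hv.2⟩
  · intro w _
    funext i
    simp
  · intro v _
    funext i
    simp

lemma rho_ge {n m : ℕ} (hn : 2 ≤ n) (hm : 1 ≤ m) (L : Fin m → ℕ) (hL1 : ∀ i, 1 ≤ L i)
    (hne : (UD n L).Nonempty) : varsigma n m ^ (m-1) ≤ rho n L := by
  classical
  have hn0 : (0:ℝ) < (n:ℝ) := by positivity
  obtain ⟨v, hv⟩ := hne
  rw [UD_eq_coe, Finset.mem_coe, mem_UDF] at hv
  obtain ⟨hvlen, hvud⟩ := hv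
  have hK : ∑ i, ((1:ℝ)/n)^(L i) ≤ 1 := kraft_ineq hn hvlen hvud
  set σ := Tuple.sort L with hσ
  set Ls : Fin m → ℕ := L ∘ σ with hLs
  have hmono : Monotone Ls := Tuple.monotone_sort L
  have hLs1 : ∀ i, 1 ≤ Ls i := fun i => hL1 _
  have hKs : ∑ i, ((1:ℝ)/n)^(Ls i) = ∑ i, ((1:ℝ)/n)^(L i) :=
    Equiv.sum_comp σ (fun i => ((1:ℝ)/n)^(L i))
  have hpartial : ∀ i : Fin m,
      ∑ j ∈ Finset.Iio i, ((1:ℝ)/n)^(Ls j) + ((1:ℝ)/n)^(Ls i) ≤ 1 := by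
    intro i
    have hins : ∑ j ∈ insert i (Finset.Iio i), ((1:ℝ)/n)^(Ls j)
        ≤ ∑ j : Fin m, ((1:ℝ)/n)^(Ls j) :=
      Finset.sum_le_sum_of_subset_of_nonneg (Finset.subset_univ _) (fun j _ _ => by positivity)
    rw [Finset.sum_insert (by simp)] at hins
    rw [hKs] at hins
    linarith
  have hfac : ∀ i : Fin m, varsigma n m ≤ 1 - ∑ j ∈ Finset.Iio i, ((1:ℝ)/n)^(Ls j) := by
    intro i
    have hp : (0:ℝ) < ((1:ℝ)/n)^(Ls i) := by positivity
    have hlt : ∑ j ∈ Finset.Iio i, ((1:ℝ)/n)^(Ls j) < 1 := by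
      have := hpartial i; linarith
    have hb := sum_pow_bound hn (i.val) (Finset.Iio i) Ls (by simp) (fun j _ => hLs1 j) hlt
    have h2 : varsigma n m ≤ varsigma n i.val := vs_anti hn (le_of_lt i.isLt)
    linarith
  have hfacle : ∀ i : Fin m, ∑ j ∈ Finset.Iio i, ((1:ℝ)/n)^(Ls j) ≤ 1 := by
    intro i
    have := hfac i
    have := vs_pos hn m
    linarith
  have hPR := PRF_count hn m Ls hmono hLs1 hfacle
  -- UD bound
  have hUDle : ((UDF n L).card : ℝ) ≤ ∏ i, (n:ℝ)^(L i) := by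
    have h1 : (UDF n L).card ≤ (codesF n L).card := Finset.card_le_card (Finset.filter_subset _ _)
    have h2 : ((codesF n L).card : ℝ) = ∏ i, (n:ℝ)^(L i) := by
      rw [card_codesF]; push_cast; rfl
    calc ((UDF n L).card : ℝ) ≤ ((codesF n L).card : ℝ) := by exact_mod_cast h1
    _ = _ := h2
  have hUDpos : 0 < ((UDF n L).card : ℝ) := by
    have : v ∈ UDF n L := mem_UDF.mpr ⟨hvlen, hvud⟩
    exact_mod_cast Finset.card_pos.mpr ⟨v, this⟩
  set N : ℝ := ∏ i, (n:ℝ)^(Ls i) with hN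
  have hNpos : 0 < N := Finset.prod_pos (fun i _ => by positivity)
  have hNL : N = ∏ i, (n:ℝ)^(L i) := Equiv.prod_comp σ (fun i => (n:ℝ)^(L i))
  have hX : ∏ i, ((n:ℝ)^(Ls i) * (1 - ∑ j ∈ Finset.Iio i, ((1:ℝ)/n)^(Ls j)))
      = N * ∏ i, (1 - ∑ j ∈ Finset.Iio i, ((1:ℝ)/n)^(Ls j)) := Finset.prod_mul_distrib
  -- product of factors ≥ ς^(m-1)
  have hProd : varsigma n m ^ (m-1) ≤ ∏ i, (1 - ∑ j ∈ Finset.Iio i, ((1:ℝ)/n)^(Ls j)) := by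
    obtain ⟨m', rfl⟩ : ∃ m', m = m' + 1 := ⟨m - 1, by omega⟩
    have h0 : (1 - ∑ j ∈ Finset.Iio (0 : Fin (m'+1)), ((1:ℝ)/n)^(Ls j)) = 1 := by
      have : Finset.Iio (0 : Fin (m'+1)) = ∅ := by
        ext j
        simp only [Finset.mem_Iio, Finset.notMem_empty, iff_false]
        exact Fin.not_lt_zero j
      rw [this]
      simp
    have hcard : (Finset.univ.erase (0 : Fin (m'+1))).card = m' := by
      rw [Finset.card_erase_of_mem (Finset.mem_univ _), Finset.card_univ, Fintype.card_fin]
      omega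
    calc varsigma n (m'+1) ^ (m'+1-1)
        = ∏ _i ∈ Finset.univ.erase (0 : Fin (m'+1)), varsigma n (m'+1) := by
          rw [Finset.prod_const, hcard]
          norm_num
    _ ≤ ∏ i ∈ Finset.univ.erase (0 : Fin (m'+1)),
          (1 - ∑ j ∈ Finset.Iio i, ((1:ℝ)/n)^(Ls j)) :=
          Finset.prod_le_prod (fun i _ => (vs_pos hn _).le) (fun i _ => hfac i)
    _ = (1 - ∑ j ∈ Finset.Iio (0 : Fin (m'+1)), ((1:ℝ)/n)^(Ls j)) *
          ∏ i ∈ Finset.univ.erase (0 : Fin (m'+1)),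
          (1 - ∑ j ∈ Finset.Iio i, ((1:ℝ)/n)^(Ls j)) := by rw [h0, one_mul]
    _ = ∏ i, (1 - ∑ j ∈ Finset.Iio i, ((1:ℝ)/n)^(Ls j)) :=
          Finset.mul_prod_erase Finset.univ
            (fun i => (1 - ∑ j ∈ Finset.Iio i, ((1:ℝ)/n)^(Ls j))) (Finset.mem_univ 0)
  -- combine
  have hPcard : ((PRF n L).card : ℝ) = ((PRF n Ls).card : ℝ) := by
    exact_mod_cast (PRF_perm_card L σ).symm
  have hP : varsigma n m ^ (m-1) * N ≤ ((PRF n L).card : ℝ) := by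
    rw [hPcard]
    calc varsigma n m ^ (m-1) * N = N * varsigma n m ^ (m-1) := by ring
    _ ≤ N * ∏ i, (1 - ∑ j ∈ Finset.Iio i, ((1:ℝ)/n)^(Ls j)) :=
        mul_le_mul_of_nonneg_left hProd hNpos.le
    _ = ∏ i, ((n:ℝ)^(Ls i) * (1 - ∑ j ∈ Finset.Iio i, ((1:ℝ)/n)^(Ls j))) := hX.symm
    _ ≤ ((PRF n Ls).card : ℝ) := hPR
  rw [rho_eq]
  have h1 : varsigma n m ^ (m-1) ≤ ((PRF n L).card : ℝ) / N := (le_div_iff₀ hNpos).mpr hP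
  have h2 : ((PRF n L).card : ℝ) / N ≤ ((PRF n L).card : ℝ) / ((UDF n L).card : ℝ) := by
    apply div_le_div_of_nonneg_left (Nat.cast_nonneg _) hUDpos
    rw [← hNL] at hUDle
    exact hUDle
  linarith

lemma UD_witness {n : ℕ} (hn : 2 ≤ n) (m : ℕ) :
    (UD n (fun i : Fin m => i.val + 1)).Nonempty := by
  refine ⟨fun i => List.replicate i.val (⟨0, by omega⟩ : Fin n) ++ [⟨1, by omega⟩], ?_, ?_⟩
  · intro i
    simp
  · apply prefixcode_isUD
    refine ⟨?_, ?_, ?_⟩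
    · intro a b hab
      have := congrArg List.length hab
      simp only [List.length_append, List.length_replicate, List.length_cons,
        List.length_nil] at this
      exact Fin.ext (by omega)
    · intro i
      simp
    · intro i j hij h
      have hlen : i.val + 1 ≤ j.val + 1 := by
        have := h.length_le
        simpa using this
      have hij' : i.val < j.val := by
        have : i.val ≠ j.val := fun e => hij (Fin.ext e)
        omega
      have hget := h.getElem (i := i.val) (by simp)
      rw [List.getElem_append_right (by simp)] at hget
      rw [List.getElem_append_left (by simpa using hij')] at hget
      rw [List.getElem_replicate] at hget
      simp at hget

lemma qnm_pos {n m : ℕ} (hn : 2 ≤ n) (hm : 1 ≤ m) : 0 < qnm n m := by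
  rw [qnm]
  split_ifs with h
  · norm_num
  · have h3 : 3 ≤ m := by omega
    have : 0 < (m-1 : ℕ) := by omega
    positivity

lemma qnm_le_one {n m : ℕ} (hn : 2 ≤ n) (hm : 1 ≤ m) : qnm n m ≤ 1 := by
  rw [qnm]
  split_ifs with h
  · exact le_rfl
  · have h3 : 3 ≤ m := by omega
    have hpos : (0:ℝ) < ((m-1 : ℕ) : ℝ) ^ (m-1) := by
      have : 0 < (m-1 : ℕ) := by omega
      positivity
    rw [div_le_one hpos]
    exact_mod_cast Nat.factorial_le_pow (m-1)

/-- Corollary 1: `ξ_{n,m} ≥ q_{n,m}·ς_{n,m}^{m-1}`; in particular `ξ_{n,m} > 0`. -/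
theorem stmt3 (n m : ℕ) (hn : 2 ≤ n) (hm : 1 ≤ m) :
    qnm n m * varsigma n m ^ (m - 1) ≤ xi n m ∧ 0 < xi n m := by
  have hb0 : 0 < qnm n m * varsigma n m ^ (m-1) :=
    mul_pos (qnm_pos hn hm) (pow_pos (vs_pos hn m) _)
  have hwit : (UD n (fun i : Fin m => i.val + 1)).Nonempty := UD_witness hn m
  have hmem : rho n (fun i : Fin m => i.val + 1) ∈
      {r : ℝ | ∃ L : Fin m → ℕ, (∀ i, 1 ≤ L i) ∧ (UD n L).Nonempty ∧ r = rho n L} :=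
    ⟨fun i => i.val + 1, fun i => Nat.succ_le_succ (Nat.zero_le _), hwit, rfl⟩
  have hlb : ∀ r ∈ {r : ℝ | ∃ L : Fin m → ℕ, (∀ i, 1 ≤ L i) ∧ (UD n L).Nonempty ∧ r = rho n L},
      qnm n m * varsigma n m ^ (m-1) ≤ r := by
    rintro r ⟨L, hL1, hne, rfl⟩
    calc qnm n m * varsigma n m ^ (m-1) ≤ 1 * varsigma n m ^ (m-1) :=
        mul_le_mul_of_nonneg_right (qnm_le_one hn hm) (pow_nonneg (vs_pos hn m).le _)
    _ = varsigma n m ^ (m-1) := one_mul _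
    _ ≤ rho n L := rho_ge hn hm L hL1 hne
  have h1 : qnm n m * varsigma n m ^ (m-1) ≤ xi n m := le_csInf ⟨_, hmem⟩ hlb
  exact ⟨h1, lt_of_lt_of_le hb0 h1⟩
end

section
/- Let n ≥ 2 and let L be a length distribution of length m. Let ν_1 < ν_2 < … < ν_t be the distinct values of L and let r_i be the number of entries of L equal to ν_i. Define N_1 := n^{ν_1} and N_{i+1} := n^{ν_{i+1} − ν_i}(N_i − r_i) for 1 ≤ i < t. Then |PR_n(L)| = ∏_{i=1}^{t} binom(N_i, r_i) · r_i!. -/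
open Finset Filter Topology

def words (n : ℕ) : ℕ → Finset (List (Fin n))
  | 0 => {[]}
  | (ℓ+1) => (Finset.univ ×ˢ words n ℓ).image fun p => p.1 :: p.2

lemma mem_words {n ℓ : ℕ} {w : List (Fin n)} : w ∈ words n ℓ ↔ w.length = ℓ := by
  induction ℓ generalizing w with
  | zero => simp [words, List.length_eq_zero_iff]
  | succ k ih =>
    simp only [words, Finset.mem_image, Finset.mem_product, Finset.mem_univ, true_and]
    constructor
    · rintro ⟨⟨a, b⟩, hb, rfl⟩; simp [ih.1 hb]
    · intro hw
      rcases w with _ | ⟨a, b⟩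
      · simp at hw
      · exact ⟨⟨a, b⟩, ih.2 (by simpa using hw), rfl⟩

lemma card_words (n ℓ : ℕ) : (words n ℓ).card = n ^ ℓ := by
  induction ℓ with
  | zero => simp [words]
  | succ k ih =>
    rw [words, Finset.card_image_of_injective, Finset.card_product, Finset.card_univ,
      Fintype.card_fin, ih, pow_succ, mul_comm]
    rintro ⟨a, b⟩ ⟨a', b'⟩ h
    simp only [List.cons.injEq] at h
    simp [h.1, h.2]

/-- all words of length `ℓ` whose `c`-prefix lies in `A`, where `A` has words of length `c`. -/
def extW {n : ℕ} (A : Finset (List (Fin n))) (c ℓ : ℕ) : Finset (List (Fin n)) :=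
  (A ×ˢ words n (ℓ - c)).image fun p => p.1 ++ p.2

lemma mem_ext {n : ℕ} {A : Finset (List (Fin n))} {c ℓ : ℕ}
    (hA : ∀ w ∈ A, w.length = c) (hc : c ≤ ℓ) {w : List (Fin n)} :
    w ∈ extW A c ℓ ↔ w.length = ℓ ∧ w.take c ∈ A := by
  simp only [extW, Finset.mem_image, Finset.mem_product]
  constructor
  · rintro ⟨⟨a, b⟩, ⟨ha, hb⟩, rfl⟩
    have hal : a.length = c := hA a ha
    have hbl : b.length = ℓ - c := mem_words.1 hb
    constructor
    · simp [hal, hbl, Nat.add_sub_cancel' hc]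
    · rw [← hal, List.take_left]; exact ha
  · rintro ⟨hl, ht⟩
    refine ⟨⟨w.take c, w.drop c⟩, ⟨ht, mem_words.2 (by simp [hl])⟩, by simp⟩

lemma card_ext {n : ℕ} {A : Finset (List (Fin n))} {c ℓ : ℕ}
    (hA : ∀ w ∈ A, w.length = c) :
    (extW A c ℓ).card = A.card * n ^ (ℓ - c) := by
  rw [extW, Finset.card_image_of_injOn, Finset.card_product, card_words]
  rintro ⟨a, b⟩ hab ⟨a', b'⟩ hab' h
  simp only [Finset.mem_coe, Finset.mem_product] at hab hab'
  have := List.append_inj h (by rw [hA a hab.1, hA a' hab'.1])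
  exact Prod.ext this.1 this.2

/-- counting the words in `extW A c ℓ₂` whose `ℓ₁`-prefix lies in `D ⊆ extW A c ℓ₁`. -/
lemma card_filter_take {n : ℕ} {A D : Finset (List (Fin n))} {c ℓ₁ ℓ₂ : ℕ}
    (hA : ∀ w ∈ A, w.length = c) (hc : c ≤ ℓ₁) (h12 : ℓ₁ ≤ ℓ₂)
    (hD : D ⊆ extW A c ℓ₁) [DecidableEq (List (Fin n))] :
    ((extW A c ℓ₂).filter fun w => w.take ℓ₁ ∈ D).card = D.card * n ^ (ℓ₂ - ℓ₁) := by
  rw [← card_words n (ℓ₂ - ℓ₁), ← Finset.card_product]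
  apply Finset.card_nbij' (fun w => (w.take ℓ₁, w.drop ℓ₁)) (fun p => p.1 ++ p.2)
  · intro w hw
    simp only [Finset.mem_coe, Finset.mem_filter] at hw
    simp only [Finset.mem_coe, Finset.mem_product, hw.2, true_and, mem_words]
    rw [List.length_drop, (mem_ext hA (hc.trans h12)).1 hw.1 |>.1]
  · rintro ⟨d, b⟩ hp
    simp only [Finset.mem_coe, Finset.mem_product, mem_words] at hp
    obtain ⟨hd, hb⟩ := hp
    have hdm := (mem_ext hA hc).1 (hD hd)
    simp only [Finset.mem_coe, Finset.mem_filter]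
    constructor
    · rw [mem_ext hA (hc.trans h12)]
      constructor
      · simp [hdm.1, hb, Nat.add_sub_cancel' h12]
      · rw [List.take_append_of_le_length (by rw [hdm.1]; exact hc)]
        exact hdm.2
    · rw [← hdm.1, List.take_left]; exact hd
  · intro w hw; simp
  · rintro ⟨d, b⟩ hp
    simp only [Finset.mem_coe, Finset.mem_product, mem_words] at hp
    have hdm := (mem_ext hA hc).1 (hD hp.1)
    dsimp only
    rw [← hdm.1, List.take_left, List.drop_left]

section
variable {n : ℕ} {ι : Type*} [Fintype ι]

instance finite_codes (M : ι → ℕ) (P : (ι → List (Fin n)) → Prop) :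
    Finite {v : ι → List (Fin n) // (∀ j, (v j).length = M j) ∧ P v} := by
  classical
  apply Finite.of_injective
    (fun v : {v : ι → List (Fin n) // (∀ j, (v j).length = M j) ∧ P v} =>
      (fun j => (⟨v.1 j, mem_words.2 (v.2.1 j)⟩ : {w : List (Fin n) // w ∈ words n (M j)})))
  intro v v' h
  exact Subtype.ext (funext fun j => congrArg Subtype.val (congrFun h j))

instance finite_inj (B : Finset (List (Fin n))) :
    Finite {f : ι → List (Fin n) // (∀ s, f s ∈ B) ∧ Function.Injective f} := by
  classical
  apply Finite.of_injective
    (fun f : {f : ι → List (Fin n) // (∀ s, f s ∈ B) ∧ Function.Injective f} =>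
      (fun s => (⟨f.1 s, f.2.1 s⟩ : {w : List (Fin n) // w ∈ B})))
  intro f f' h
  exact Subtype.ext (funext fun s => congrArg Subtype.val (congrFun h s))

lemma card_inj [DecidableEq ι] (B : Finset (List (Fin n))) :
    Nat.card {f : ι → List (Fin n) // (∀ s, f s ∈ B) ∧ Function.Injective f} =
      B.card.descFactorial (Fintype.card ι) := by
  classical
  have e : {f : ι → List (Fin n) // (∀ s, f s ∈ B) ∧ Function.Injective f} ≃
      (ι ↪ {w : List (Fin n) // w ∈ B}) :=
    { toFun := fun f => ⟨fun s => ⟨f.1 s, f.2.1 s⟩,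
        fun a b h => f.2.2 (congrArg Subtype.val h)⟩
      invFun := fun g => ⟨fun s => (g s).1,
        ⟨fun s => (g s).2, fun a b h => g.injective (Subtype.ext h)⟩⟩
      left_inv := fun f => rfl
      right_inv := fun g => rfl }
  rw [Nat.card_congr e, Nat.card_eq_fintype_card, Fintype.card_embedding_eq,
    Fintype.card_coe]

lemma card_sigma_const {F : Type*} [Finite F] {G : F → Type*} [∀ f, Finite (G f)] {k : ℕ}
    (h : ∀ f, Nat.card (G f) = k) : Nat.card (Σ f, G f) = Nat.card F * k := by
  letI := Fintype.ofFinite F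
  letI : ∀ f, Fintype (G f) := fun f => Fintype.ofFinite _
  rw [Nat.card_eq_fintype_card, Fintype.card_sigma, Nat.card_eq_fintype_card]
  calc ∑ f : F, Fintype.card (G f) = ∑ _f : F, k :=
        Finset.sum_congr rfl fun f _ => by rw [← Nat.card_eq_fintype_card, h f]
    _ = Fintype.card F * k := by rw [Finset.sum_const, Finset.card_univ, smul_eq_mul]

end

/-- Splitting a prefix code into its first-level words and the rest. -/
def stepEquiv {n : ℕ} {ι : Type} [Fintype ι] [DecidableEq ι] (L : ι → ℕ)
    (c : ℕ) (A : Finset (List (Fin n))) (ν1 ν2 : ℕ)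
    (hA : ∀ w ∈ A, w.length = c) (hc : c ≤ ν1)
    (fact2 : ∀ j : ι, L j ≠ ν1 → ν1 < ν2 ∧ ν2 ≤ L j) :
    {v : ι → List (Fin n) //
      (∀ j, (v j).length = L j) ∧ (∀ j, (v j).take c ∈ A) ∧ Function.Injective v ∧
        ∀ i j, i ≠ j → ¬ v i <+: v j} ≃
    Σ f : {f : {j : ι // L j = ν1} → List (Fin n) //
            (∀ s, f s ∈ extW A c ν1) ∧ Function.Injective f},
      {g : {j : ι // ¬ L j = ν1} → List (Fin n) //
        (∀ j, (g j).length = L j.1) ∧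
        ((∀ j, (g j).take ν2 ∈ (extW A c ν2).filter
            fun w => w.take ν1 ∉ Finset.image f.1 Finset.univ) ∧
        Function.Injective g ∧ ∀ i j, i ≠ j → ¬ g i <+: g j)} where
  toFun v := by
    obtain ⟨v, hv1, hv2, hv3, hv4⟩ := v
    have hc2 : ∀ j : ι, L j ≠ ν1 → c ≤ ν2 := fun j hj => hc.trans (fact2 j hj).1.le
    refine ⟨⟨fun s => v s.1, ⟨?_, ?_⟩⟩, ⟨fun j => v j.1, ⟨?_, ?_, ?_, ?_⟩⟩⟩
    · exact fun s => (mem_ext hA hc).2 ⟨by rw [hv1 s.1, s.2], hv2 s.1⟩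
    · exact fun a b h => Subtype.ext (hv3 h)
    · exact fun j => hv1 j.1
    · intro j
      obtain ⟨h21, h22⟩ := fact2 j.1 j.2
      rw [Finset.mem_filter]
      refine ⟨(mem_ext hA (hc2 j.1 j.2)).2 ⟨?_, ?_⟩, ?_⟩
      · rw [List.length_take, hv1 j.1]; omega
      · rw [List.take_take, min_eq_left (hc2 j.1 j.2)]; exact hv2 j.1
      · rw [List.take_take, min_eq_left h21.le]
        intro hmem
        obtain ⟨s, _, hs⟩ := Finset.mem_image.1 hmem
        refine hv4 s.1 j.1 (fun e => j.2 (e ▸ s.2)) ?_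
        have hs' : v s.1 = List.take ν1 (v j.1) := hs
        rw [hs']
        exact List.take_prefix ν1 (v j.1)
    · exact fun a b h => Subtype.ext (hv3 h)
    · exact fun i j hij => hv4 i.1 j.1 (fun e => hij (Subtype.ext e))
  invFun fg := by
    obtain ⟨⟨f, hf1, hf2⟩, ⟨g, hg1, hg2, hg3, hg4⟩⟩ := fg
    have hfl : ∀ s, (f s).length = ν1 := fun s => ((mem_ext hA hc).1 (hf1 s)).1
    have hfc : ∀ s, (f s).take c ∈ A := fun s => ((mem_ext hA hc).1 (hf1 s)).2
    have hc2 : ∀ j : ι, L j ≠ ν1 → c ≤ ν2 := fun j hj => hc.trans (fact2 j hj).1.le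
    have hg2a : ∀ j, ((g j).take ν2).length = ν2 ∧ ((g j).take ν2).take c ∈ A :=
      fun j => (mem_ext hA (hc2 j.1 j.2)).1 (Finset.mem_filter.1 (hg2 j)).1
    have hg2b : ∀ j, (g j).take ν1 ∉ Finset.image f Finset.univ := by
      intro j
      have := (Finset.mem_filter.1 (hg2 j)).2
      rwa [List.take_take, min_eq_left (fact2 j.1 j.2).1.le] at this
    refine ⟨fun j => if h : L j = ν1 then f ⟨j, h⟩ else g ⟨j, h⟩, ⟨?_, ?_, ?_, ?_⟩⟩
    · intro j
      by_cases h : L j = ν1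
      · simp only [dif_pos h]
        rw [hfl ⟨j, h⟩, h]
      · simp only [dif_neg h]; exact hg1 ⟨j, h⟩
    · intro j
      by_cases h : L j = ν1
      · simp only [dif_pos h]; exact hfc ⟨j, h⟩
      · simp only [dif_neg h]
        have := (hg2a ⟨j, h⟩).2
        rwa [List.take_take, min_eq_left (hc2 j h)] at this
    · intro a b hab
      by_cases ha : L a = ν1 <;> by_cases hb : L b = ν1
      · simp only [dif_pos ha, dif_pos hb] at hab
        exact congrArg Subtype.val (hf2 hab)
      · simp only [dif_pos ha, dif_neg hb] at hab
        have := congrArg List.length hab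
        rw [hfl ⟨a, ha⟩, hg1 ⟨b, hb⟩] at this
        have this' : ν1 = L b := this
        have h2 := fact2 b hb
        omega
      · simp only [dif_neg ha, dif_pos hb] at hab
        have := congrArg List.length hab
        rw [hfl ⟨b, hb⟩, hg1 ⟨a, ha⟩] at this
        have this' : L a = ν1 := this
        have h2 := fact2 a ha
        omega
      · simp only [dif_neg ha, dif_neg hb] at hab
        exact congrArg Subtype.val (hg3 hab)
    · intro a b hab hpre
      by_cases ha : L a = ν1 <;> by_cases hb : L b = ν1
      · simp only [dif_pos ha, dif_pos hb] at hpre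
        have := hpre.eq_of_length (by rw [hfl, hfl])
        exact hab (congrArg Subtype.val (hf2 this))
      · simp only [dif_pos ha, dif_neg hb] at hpre
        apply hg2b ⟨b, hb⟩
        have hpt := List.prefix_iff_eq_take.1 hpre
        rw [hfl ⟨a, ha⟩] at hpt
        rw [← hpt]
        exact Finset.mem_image_of_mem f (Finset.mem_univ _)
      · simp only [dif_neg ha, dif_pos hb] at hpre
        have := hpre.length_le
        rw [hg1 ⟨a, ha⟩, hfl ⟨b, hb⟩] at this
        have this' : L a ≤ ν1 := this
        have h2 := fact2 a ha
        omega
      · simp only [dif_neg ha, dif_neg hb] at hpre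
        exact hg4 ⟨a, ha⟩ ⟨b, hb⟩ (fun e => hab (congrArg Subtype.val e)) hpre
  left_inv v := by
    obtain ⟨v, hv1, hv2, hv3, hv4⟩ := v
    apply Subtype.ext
    funext j
    by_cases h : L j = ν1
    · exact dif_pos h
    · exact dif_neg h
  right_inv fg := by
    obtain ⟨⟨f, hf1, hf2⟩, ⟨g, hg1, hg2, hg3, hg4⟩⟩ := fg
    apply Sigma.subtype_ext
    · apply Subtype.ext
      funext s
      exact dif_pos s.2
    · funext j
      exact dif_neg j.2

lemma key (n : ℕ) : ∀ (t : ℕ) (ι : Type) [Fintype ι] [DecidableEq ι] (L : ι → ℕ)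
    (c : ℕ) (A : Finset (List (Fin n))) (ν r N : ℕ → ℕ),
    (1 ≤ t → ∀ w ∈ A, w.length = c) →
    (1 ≤ t → c ≤ ν 1) →
    (∀ i j, 1 ≤ i → i < j → j ≤ t → ν i < ν j) →
    (∀ j, ∃ i, 1 ≤ i ∧ i ≤ t ∧ L j = ν i) →
    (∀ i, 1 ≤ i → i ≤ t → r i = Nat.card {j : ι // L j = ν i}) →
    (1 ≤ t → N 1 = A.card * n ^ (ν 1 - c)) →
    (∀ i, 1 ≤ i → i < t → N (i + 1) = n ^ (ν (i + 1) - ν i) * (N i - r i)) →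
    Nat.card {v : ι → List (Fin n) //
      (∀ j, (v j).length = L j) ∧ (∀ j, (v j).take c ∈ A) ∧ Function.Injective v ∧
        ∀ i j, i ≠ j → ¬ v i <+: v j} =
      ∏ i ∈ Finset.Icc 1 t, Nat.choose (N i) (r i) * Nat.factorial (r i) := by
  intro t
  induction t with
  | zero =>
    intro ι _ _ L c A ν r N hA hc hmono hval' hr hN1 hN
    haveI : IsEmpty ι := ⟨fun j => by obtain ⟨i, h1, h2, _⟩ := hval' j; omega⟩
    haveI : Unique {v : ι → List (Fin n) //
        (∀ j, (v j).length = L j) ∧ (∀ j, (v j).take c ∈ A) ∧ Function.Injective v ∧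
          ∀ i j, i ≠ j → ¬ v i <+: v j} :=
      { default := ⟨fun j => isEmptyElim j,
          ⟨fun j => isEmptyElim j, fun j => isEmptyElim j,
            fun a => isEmptyElim a, fun i => isEmptyElim i⟩⟩
        uniq := fun a => Subtype.ext (funext fun j => isEmptyElim j) }
    rw [Nat.card_unique]
    simp
  | succ t ih =>
    intro ι _ _ L c A ν r N hA hc hmono hval' hr hN1 hN
    classical
    have hA0 := hA (by omega)
    have hc0 := hc (by omega)
    have hN10 := hN1 (by omega)
    -- basic facts about the levels
    have fact1 : ∀ j : ι, ν 1 ≤ L j := by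
      intro j
      obtain ⟨i, h1, h2, h3⟩ := hval' j
      rcases eq_or_lt_of_le h1 with h | h
      · rw [h3, ← h]
      · exact h3 ▸ (hmono 1 i (le_refl 1) h h2).le
    have fact2 : ∀ j : ι, L j ≠ ν 1 → ν 1 < ν 2 ∧ ν 2 ≤ L j := by
      intro j hj
      obtain ⟨i, h1, h2, h3⟩ := hval' j
      have hi2 : 2 ≤ i := by
        rcases Nat.lt_or_ge i 2 with h | h
        · interval_cases i
          · exact absurd h3 hj
        · exact h
      refine ⟨hmono 1 2 (le_refl 1) (by omega) (by omega), ?_⟩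
      rcases eq_or_lt_of_le hi2 with h | h
      · rw [h3, ← h]
      · exact h3 ▸ (hmono 2 i (by omega) h h2).le
    -- the set of allowed first-level words
    have hBcard : (extW A c (ν 1)).card = N 1 := by rw [card_ext hA0, hN10]
    have hBmem : ∀ {w : List (Fin n)}, w ∈ extW A c (ν 1) ↔ w.length = ν 1 ∧ w.take c ∈ A :=
      fun {w} => mem_ext hA0 hc0
    have hrcard : r 1 = Fintype.card {j : ι // L j = ν 1} := by
      rw [hr 1 (le_refl 1) (by omega), Nat.card_eq_fintype_card]
    -- X is the set we are counting
    by_cases hr1N : r 1 ≤ N 1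
    case neg =>
      -- too many words demanded at the first level: both sides are zero
      rw [Finset.prod_eq_zero (Finset.mem_Icc.2 ⟨le_refl 1, by omega⟩)
          (by rw [Nat.choose_eq_zero_of_lt (by omega), zero_mul]),
        Nat.card_eq_zero]
      left
      constructor
      intro v
      obtain ⟨hv1, hv2, hv3, hv4⟩ := v.2
      have : Fintype.card {j : ι // L j = ν 1} ≤ Fintype.card {w : List (Fin n) // w ∈ extW A c (ν 1)} := by
        apply Fintype.card_le_of_injective
          (fun j => ⟨v.1 j.1, hBmem.2 ⟨by rw [hv1 j.1, j.2], hv2 j.1⟩⟩)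
        intro a b h
        exact Subtype.ext (hv3 (congrArg Subtype.val h))
      rw [Fintype.card_coe, hBcard, ← hrcard] at this
      omega
    case pos =>
      rw [Nat.card_congr (stepEquiv L c A (ν 1) (ν 2) hA0 hc0 fact2)]
      refine Eq.trans (card_sigma_const (k := ∏ i ∈ Finset.Icc 1 t,
          Nat.choose (N (i + 1)) (r (i + 1)) * Nat.factorial (r (i + 1))) fun f => ?_) ?_
      · -- each fiber is counted by the induction hypothesis
        refine ih {j : ι // ¬ L j = ν 1} (fun j => L j.1) (ν 2) _ (fun i => ν (i + 1)) (fun i => r (i + 1))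
          (fun i => N (i + 1)) ?_ (fun _ => le_refl _) ?_ ?_ ?_ ?_ ?_
        · -- all words in the new prefix pool have length ν 2
          intro ht w hw
          have h12 : ν 1 ≤ ν 2 := (hmono 1 2 (le_refl 1) one_lt_two (by omega)).le
          exact ((mem_ext hA0 (hc0.trans h12)).1 (Finset.mem_filter.1 hw).1).1
        · exact fun i j h1 h2 h3 => hmono (i + 1) (j + 1) (by omega) (by omega) (by omega)
        · intro j
          obtain ⟨i, h1, h2, h3⟩ := hval' j.1
          have hne : i ≠ 1 := fun e => j.2 (by rw [h3, e])
          exact ⟨i - 1, by omega, by omega, by rw [h3]; congr 1; omega⟩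
        · intro i h1 h2
          rw [hr (i + 1) (by omega) (by omega)]
          have hne : ν 1 < ν (i + 1) := hmono 1 (i + 1) (le_refl 1) (by omega) (by omega)
          exact Nat.card_congr
            { toFun := fun j => ⟨⟨j.1, fun e => absurd (e ▸ j.2) (by intro h; omega)⟩, j.2⟩
              invFun := fun j => ⟨j.1.1, j.2⟩
              left_inv := fun j => rfl
              right_inv := fun j => rfl }
        · -- the cardinality of the new pool is N 2
          intro ht
          rw [Nat.sub_self, pow_zero, mul_one]
          have h12 : ν 1 ≤ ν 2 := (hmono 1 2 (le_refl 1) one_lt_two (by omega)).le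
          have himg : Finset.image f.1 Finset.univ ⊆ extW A c (ν 1) := by
            intro w hw
            obtain ⟨s, _, rfl⟩ := Finset.mem_image.1 hw
            exact f.2.1 s
          have hicard : (Finset.image f.1 Finset.univ).card = r 1 := by
            rw [Finset.card_image_of_injective _ f.2.2, Finset.card_univ, ← hrcard]
          have hfiltercard : ((extW A c (ν 2)).filter
              fun w => w.take (ν 1) ∈ Finset.image f.1 Finset.univ).card
                = r 1 * n ^ (ν 2 - ν 1) := by
            rw [card_filter_take hA0 hc0 h12 himg, hicard]
          have hsplit := Finset.card_filter_add_card_filter_not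
            (s := extW A c (ν 2)) (p := fun w => w.take (ν 1) ∈ Finset.image f.1 Finset.univ)
          have hext2 : (extW A c (ν 2)).card = N 1 * n ^ (ν 2 - ν 1) := by
            rw [card_ext hA0, hN10]
            have : ν 2 - c = (ν 1 - c) + (ν 2 - ν 1) := by omega
            rw [this, pow_add, ← mul_assoc]
          have hrK : r 1 * n ^ (ν 2 - ν 1) ≤ N 1 * n ^ (ν 2 - ν 1) :=
            Nat.mul_le_mul_right _ hr1N
          have hcardA' : ((extW A c (ν 2)).filter
              fun w => w.take (ν 1) ∉ Finset.image f.1 Finset.univ).card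
                = N 1 * n ^ (ν 2 - ν 1) - r 1 * n ^ (ν 2 - ν 1) := by omega
          rw [hN 1 (le_refl 1) (by omega), hcardA', ← Nat.sub_mul, mul_comm]
        · exact fun i h1 h2 => hN (i + 1) (by omega) (by omega)
      · -- assembling the product
        rw [card_inj, hBcard, ← hrcard, Nat.descFactorial_eq_factorial_mul_choose]
        rw [← Finset.Ico_add_one_right_eq_Icc (a := 1) (b := t + 1), Finset.prod_Ico_eq_prod_range,
          Nat.add_sub_cancel, Finset.prod_range_succ']
        rw [← Finset.Ico_add_one_right_eq_Icc (a := 1) (b := t), Finset.prod_Ico_eq_prod_range, Nat.add_sub_cancel]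
        have hPP : (∏ k ∈ Finset.range t,
              Nat.choose (N (1 + k + 1)) (r (1 + k + 1)) * Nat.factorial (r (1 + k + 1)))
            = ∏ k ∈ Finset.range t,
              Nat.choose (N (1 + (k + 1))) (r (1 + (k + 1))) * Nat.factorial (r (1 + (k + 1))) :=
          Finset.prod_congr rfl fun k _ => rfl
        rw [hPP]
        ring

/-- The Kraft-type counting formula for `|PR_n(L)|`: if `ν 1 < … < ν t` are the distinct
values of `L`, `r i` is the number of entries of `L` equal to `ν i`, `N 1 = n^{ν 1}` and
`N (i+1) = n^{ν(i+1) - ν i}·(N i - r i)`, then `|PR_n(L)| = ∏_{i=1}^t C(N i, r i)·(r i)!`. -/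
theorem stmt5 (n : ℕ) (hn : 2 ≤ n) (m t : ℕ) (L : Fin m → ℕ) (hL : ∀ i, 1 ≤ L i)
    (ν r N : ℕ → ℕ)
    (hmono : ∀ i j, 1 ≤ i → i < j → j ≤ t → ν i < ν j)
    (hval : ∀ i, 1 ≤ i → i ≤ t → ∃ j, L j = ν i)
    (hval' : ∀ j, ∃ i, 1 ≤ i ∧ i ≤ t ∧ L j = ν i)
    (hr : ∀ i, 1 ≤ i → i ≤ t → r i = (Finset.univ.filter fun j => L j = ν i).card)
    (hN1 : N 1 = n ^ ν 1)
    (hN : ∀ i, 1 ≤ i → i < t → N (i + 1) = n ^ (ν (i + 1) - ν i) * (N i - r i)) :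
    (PR n L).ncard = ∏ i ∈ Finset.Icc 1 t, Nat.choose (N i) (r i) * Nat.factorial (r i) := by
  classical
  rw [← Nat.card_coe_set_eq]
  have hcongr : Nat.card (PR n L) = Nat.card {v : Fin m → List (Fin n) //
      (∀ j, (v j).length = L j) ∧ (∀ j, (v j).take 0 ∈ ({[]} : Finset (List (Fin n)))) ∧
        Function.Injective v ∧ ∀ i j, i ≠ j → ¬ v i <+: v j} := by
    apply Nat.card_congr
    apply Equiv.subtypeEquivRight
    intro v
    simp only [PR, Set.mem_setOf_eq, IsPrefixCode, List.take_zero, Finset.mem_singleton]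
    constructor
    · rintro ⟨h1, h2, h3, h4⟩
      exact ⟨h1, fun j => trivial, h2, h4⟩
    · rintro ⟨h1, -, h3, h4⟩
      refine ⟨h1, h3, fun i e => ?_, h4⟩
      have hli := h1 i
      rw [e] at hli
      have := hL i
      simp only [List.length_nil] at hli
      omega
  rw [hcongr]
  apply key n t (Fin m) L 0 {[]} ν r N
  · intro _ w hw
    simp only [Finset.mem_singleton] at hw
    simp [hw]
  · exact fun _ => Nat.zero_le _
  · exact hmono
  · exact hval'
  · intro i h1 h2
    rw [hr i h1 h2, Nat.card_eq_fintype_card, Fintype.card_subtype]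
  · intro _
    simpa using hN1
  · exact hN
end

section
/- For all integers n ≥ 2 and m ≥ 1, ξ_{n,m} ≤ 1/η_{n,m}, where η_{n,m} := 1 + Σ_{i=1}^{m−1} binom(m−1, i)/(n^i − 1). -/
open Finset Filter Topology

section Key
variable {X : Type*}

lemma repl_eq_aux (x : X) : ∀ (c d : ℕ) (r r' : List X),
    r.head? ≠ some x → r'.head? ≠ some x →
    List.replicate c x ++ r = List.replicate d x ++ r' → c = d ∧ r = r' := by
  intro c
  induction c with
  | zero =>
    intro d r r' hr hr' h
    cases d with
    | zero => simpa using h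
    | succ d =>
      exfalso; apply hr
      simp only [List.replicate_zero, List.nil_append, List.replicate_succ, List.cons_append] at h
      rw [h]; rfl
  | succ c ih =>
    intro d r r' hr hr' h
    cases d with
    | zero =>
      exfalso; apply hr'
      simp only [List.replicate_zero, List.nil_append, List.replicate_succ, List.cons_append] at h
      rw [← h]; rfl
    | succ d =>
      rw [List.replicate_succ, List.replicate_succ] at h
      simp only [List.cons_append, List.cons.injEq] at h
      obtain ⟨h1, h2⟩ := ih d r r' hr hr' h.2
      exact ⟨by omega, h2⟩

lemma isUD_shift {M : ℕ} (x : X) (a : Fin M → ℕ) (u : Fin M → List X)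
    (hne : ∀ i, u i ≠ []) (hhd : ∀ i, (u i).head? ≠ some x)
    (hpf : ∀ i j, i ≠ j → ¬ u i <+: u j) :
    IsUDCode (Fin.cons [x] (fun i => List.replicate (a i) x ++ u i) : Fin (M+1) → List X) := by
  set v : Fin (M+1) → List X := Fin.cons [x] (fun i => List.replicate (a i) x ++ u i) with hv
  have decomp : ∀ s : List (Fin (M+1)), ∃ p r, s = List.replicate p 0 ++ r ∧
      (r = [] ∨ ∃ i r', r = (Fin.succ i) :: r') := by
    intro s
    induction s with
    | nil => exact ⟨0, [], rfl, Or.inl rfl⟩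
    | cons h t ih =>
      rcases Fin.eq_zero_or_eq_succ h with h0 | ⟨j, rfl⟩
      · obtain ⟨p, r, hpr, hr⟩ := ih
        exact ⟨p + 1, r, by rw [h0, hpr, List.replicate_succ]; rfl, hr⟩
      · exact ⟨0, _ :: t, rfl, Or.inr ⟨j, t, rfl⟩⟩
  have flat_rep : ∀ p, ((List.replicate p (0 : Fin (M+1))).map v).flatten = List.replicate p x := by
    intro p
    induction p with
    | zero => rfl
    | succ p ih =>
      rw [List.replicate_succ, List.replicate_succ, List.map_cons, List.flatten_cons, ih]
      rfl
  have flat_app : ∀ (s t : List (Fin (M+1))),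
      ((s ++ t).map v).flatten = (s.map v).flatten ++ (t.map v).flatten := by
    intro s t; rw [List.map_append, List.flatten_append]
  have hdhd : ∀ (i : Fin M) (z : List X), (u i ++ z).head? ≠ some x := by
    intro i z
    rw [List.head?_append_of_ne_nil _ (hne i)]
    exact hhd i
  have flat_s : ∀ (p : ℕ) (i : Fin M) (s₂ : List (Fin (M+1))),
      (((List.replicate p 0 ++ Fin.succ i :: s₂) : List (Fin (M+1))).map v).flatten
        = List.replicate (p + a i) x ++ (u i ++ (s₂.map v).flatten) := by
    intro p i s₂
    rw [flat_app, flat_rep, List.map_cons, List.flatten_cons]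
    have : v (Fin.succ i) = List.replicate (a i) x ++ u i := by
      rw [hv, Fin.cons_succ]
    rw [this, List.replicate_add, List.append_assoc, List.append_assoc]
  have main : ∀ N (s t : List (Fin (M+1))), s.length = N →
      (s.map v).flatten = (t.map v).flatten → s = t := by
    intro N
    induction N using Nat.strong_induction_on with
    | _ N ih =>
      intro s t hlen heq
      obtain ⟨p, r, rfl, hr⟩ := decomp s
      obtain ⟨q, r', rfl, hr'⟩ := decomp t
      rcases hr with rfl | ⟨i, s₂, rfl⟩
      · rcases hr' with rfl | ⟨j, t₂, rfl⟩
        · -- both replicate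
          simp only [List.append_nil] at heq ⊢
          rw [flat_rep, flat_rep] at heq
          have : p = q := by
            have := congrArg List.length heq; simpa using this
          rw [this]
        · exfalso
          simp only [List.append_nil] at heq
          rw [flat_rep, flat_s] at heq
          have := repl_eq_aux x p (q + a j) [] (u j ++ (t₂.map v).flatten)
            (by simp) (hdhd j _) (by simpa using heq)
          exact hne j (List.append_eq_nil_iff.mp this.2.symm).1
      · rcases hr' with rfl | ⟨j, t₂, rfl⟩
        · exfalso
          simp only [List.append_nil] at heq
          rw [flat_rep, flat_s] at heq
          have := repl_eq_aux x (p + a i) q (u i ++ (s₂.map v).flatten) []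
            (hdhd i _) (by simp) (by simpa using heq)
          exact hne i (List.append_eq_nil_iff.mp this.2).1
        · rw [flat_s, flat_s] at heq
          obtain ⟨hc, hE⟩ := repl_eq_aux x (p + a i) (q + a j) _ _ (hdhd i _) (hdhd j _) heq
          have hij : i = j := by
            by_contra hij
            have h1 : u i <+: (u j ++ (t₂.map v).flatten) := ⟨_, hE⟩
            have h2 : u j <+: (u j ++ (t₂.map v).flatten) := List.prefix_append _ _
            rcases le_total (u i).length (u j).length with hl | hl
            · exact hpf i j hij (List.prefix_of_prefix_length_le h1 h2 hl)
            · exact hpf j i (Ne.symm hij) (List.prefix_of_prefix_length_le h2 h1 hl)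
          subst hij
          have hflat : (s₂.map v).flatten = (t₂.map v).flatten :=
            List.append_cancel_left hE
          have hlt : s₂.length < N := by
            rw [← hlen]
            simp only [List.length_append, List.length_replicate, List.length_cons]
            omega
          have h2 := ih s₂.length hlt s₂ t₂ rfl hflat
          have hpq : p = q := by omega
          rw [h2, hpq]
  intro s t _ _ heq
  exact main s.length s t rfl heq

end Key

section Count

open scoped Classical

variable {n : ℕ}

/-- the bool predicate "is zero" -/
def p0 {n : ℕ} : Fin (n+2) → Bool := fun c => decide (c = 0)

lemma takeWhile_repl (w : List (Fin (n+2))) :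
    w.takeWhile p0 = List.replicate (w.takeWhile p0).length 0 := by
  rw [List.eq_replicate_length]
  intro b hb
  have := List.mem_takeWhile_imp hb
  simpa [p0] using this

lemma decomp_w (w : List (Fin (n+2))) :
    w = List.replicate (w.takeWhile p0).length 0 ++ w.dropWhile p0 := by
  conv_lhs => rw [← List.takeWhile_append_dropWhile (p := p0) (l := w)]
  rw [← takeWhile_repl]

lemma st_len_le (w : List (Fin (n+2))) : (w.dropWhile p0).length ≤ w.length :=
  (List.dropWhile_suffix p0).length_le

lemma st_inj (w₁ w₂ : List (Fin (n+2))) (hl : w₁.length = w₂.length)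
    (h : w₁.dropWhile p0 = w₂.dropWhile p0) : w₁ = w₂ := by
  have e1 := decomp_w w₁
  have e2 := decomp_w w₂
  have hlen : (w₁.takeWhile p0).length = (w₂.takeWhile p0).length := by
    have l1 := congrArg List.length e1
    have l2 := congrArg List.length e2
    have l3 := congrArg List.length h
    simp only [List.length_append, List.length_replicate] at l1 l2
    omega
  rw [e1, e2, hlen, h]

lemma st_head (w : List (Fin (n+2))) (y : Fin (n+2)) (l' : List (Fin (n+2)))
    (h : w.dropWhile p0 = y :: l') : y ≠ 0 := by
  have hl : 0 < (w.dropWhile p0).length := by rw [h]; simp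
  have := List.dropWhile_get_zero_not p0 w hl
  rw [List.get_eq_getElem] at this
  simp only [h] at this
  simpa [p0] using this

lemma st_nil (w : List (Fin (n+2))) (h : w.dropWhile p0 = []) :
    w = List.replicate w.length 0 := by
  have := decomp_w w
  rw [h, List.append_nil] at this
  have hlen : (w.takeWhile p0).length = w.length := by
    have := congrArg List.length this; simpa using this.symm
  rw [← hlen]; exact this

variable {M K : ℕ}

/-- stripped word -/
def sg (g : Fin M → Fin (K+1) → Fin (n+2)) (i : Fin M) : List (Fin (n+2)) :=
  (List.ofFn (g i)).dropWhile p0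

def Good (g : Fin M → Fin (K+1) → Fin (n+2)) : Prop :=
  (∀ i, sg g i ≠ []) ∧ ∀ i j, i ≠ j → ¬ sg g i <+: sg g j

lemma card_compl_ne (i : Fin M) :
    Fintype.card {j : Fin M // j ≠ i} = M - 1 := by
  have : Fintype.card {j : Fin M // j = i} = 1 := Fintype.card_subtype_eq i
  have h := Fintype.card_subtype_compl (fun j : Fin M => j = i)
  simp only [this, Fintype.card_fin] at h
  convert h using 2

lemma card_restrict_fun (i : Fin M) :
    Fintype.card ({j : Fin M // j ≠ i} → Fin (K+1) → Fin (n+2)) =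
      ((n+2)^(K+1))^(M-1) := by
  rw [Fintype.card_fun, Fintype.card_fun, Fintype.card_fin, Fintype.card_fin,
    card_compl_ne, ← pow_mul]

lemma countA (i : Fin M) :
    (univ.filter (fun g : Fin M → Fin (K+1) → Fin (n+2) => sg g i = [])).card
      ≤ ((n+2)^(K+1))^(M-1) := by
  rw [← card_restrict_fun (n := n) (K := K) i, ← Finset.card_univ]
  apply Finset.card_le_card_of_injOn (fun g => fun j => g j.1)
  · intro g _; exact Finset.mem_univ _
  · intro g₁ h₁ g₂ h₂ hgg
    simp only [Finset.mem_coe, Finset.mem_filter] at h₁ h₂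
    have e1 : g₁ i = fun _ => 0 := by
      have := st_nil _ h₁.2
      have : List.ofFn (g₁ i) = List.ofFn (fun _ : Fin (K+1) => (0 : Fin (n+2))) := by
        rw [this, List.ofFn_const, List.length_ofFn]
      exact List.ofFn_injective this
    have e2 : g₂ i = fun _ => 0 := by
      have := st_nil _ h₂.2
      have : List.ofFn (g₂ i) = List.ofFn (fun _ : Fin (K+1) => (0 : Fin (n+2))) := by
        rw [this, List.ofFn_const, List.length_ofFn]
      exact List.ofFn_injective this
    funext j
    by_cases hj : j = i
    · rw [hj, e1, e2]
    · exact congrFun hgg ⟨j, hj⟩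

lemma countB (i j : Fin M) (hij : i ≠ j) :
    (univ.filter (fun g : Fin M → Fin (K+1) → Fin (n+2) => sg g i <+: sg g j)).card
      ≤ (K+2) * ((n+2)^(K+1))^(M-1) := by
  classical
  have hcard : ((Finset.range (K+2)) ×ˢ (Finset.univ :
      Finset ({j' : Fin M // j' ≠ i} → Fin (K+1) → Fin (n+2)))).card
      = (K+2) * ((n+2)^(K+1))^(M-1) := by
    rw [Finset.card_product, Finset.card_range, Finset.card_univ, card_restrict_fun]
  rw [← hcard]
  apply Finset.card_le_card_of_injOn
    (fun g => ((sg g i).length, fun j' => g j'.1))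
  · intro g hg
    simp only [Finset.mem_coe, Finset.mem_product, Finset.mem_range, Finset.mem_univ, and_true]
    have := st_len_le (List.ofFn (g i))
    simp only [List.length_ofFn] at this
    unfold sg
    omega
  · intro g₁ h₁ g₂ h₂ hgg
    simp only [Finset.mem_coe, Finset.mem_filter, Prod.mk.injEq] at h₁ h₂ hgg
    obtain ⟨hlen, hfun⟩ := hgg
    have hj : g₁ j = g₂ j := congrFun hfun ⟨j, hij.symm⟩
    have hpre1 : sg g₁ i <+: sg g₂ j := by
      unfold sg at *
      rw [← hj]; exact h₁.2
    have hpre2 : sg g₂ i <+: sg g₂ j := h₂.2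
    have heq : sg g₁ i = sg g₂ i := by
      apply (List.prefix_of_prefix_length_le hpre1 hpre2 (le_of_eq hlen)).eq_of_length hlen
    have hi : g₁ i = g₂ i := by
      apply List.ofFn_injective
      apply st_inj _ _ (by simp) heq
    funext j'
    by_cases hj' : j' = i
    · rw [hj', hi]
    · exact congrFun hfun ⟨j', hj'⟩

lemma countGood :
    ((n+2)^(K+1))^M ≤ (univ.filter (Good (n := n) (M := M) (K := K))).card
      + M * ((n+2)^(K+1))^(M-1) + M * M * ((K+2) * ((n+2)^(K+1))^(M-1)) := by
  classical
  have htotal : (Finset.univ : Finset (Fin M → Fin (K+1) → Fin (n+2))).card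
      = ((n+2)^(K+1))^M := by
    rw [Finset.card_univ, Fintype.card_fun, Fintype.card_fun, Fintype.card_fin,
      Fintype.card_fin, Fintype.card_fin, ← pow_mul]
  have hsplit := Finset.card_filter_add_card_filter_not
    (s := (Finset.univ : Finset (Fin M → Fin (K+1) → Fin (n+2)))) (p := Good)
  have hbad : (univ.filter (fun g : Fin M → Fin (K+1) → Fin (n+2) => ¬ Good g)).card
      ≤ M * ((n+2)^(K+1))^(M-1) + M * M * ((K+2) * ((n+2)^(K+1))^(M-1)) := by
    have hsub : univ.filter (fun g : Fin M → Fin (K+1) → Fin (n+2) => ¬ Good g) ⊆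
        (univ.biUnion (fun i : Fin M =>
          univ.filter (fun g : Fin M → Fin (K+1) → Fin (n+2) => sg g i = []))) ∪
        ((univ : Finset (Fin M)).offDiag.biUnion (fun p =>
          univ.filter (fun g : Fin M → Fin (K+1) → Fin (n+2) => sg g p.1 <+: sg g p.2))) := by
      intro g hg
      simp only [Finset.mem_filter, Finset.mem_univ, true_and, Good, not_and_or] at hg
      rcases hg with hg | hg
      · push_neg at hg
        obtain ⟨i, hi⟩ := hg
        apply Finset.mem_union_left
        exact Finset.mem_biUnion.mpr ⟨i, Finset.mem_univ _, by simp [hi]⟩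
      · push_neg at hg
        obtain ⟨i, j, hij, hpre⟩ := hg
        apply Finset.mem_union_right
        apply Finset.mem_biUnion.mpr
        exact ⟨(i, j), Finset.mem_offDiag.mpr ⟨Finset.mem_univ _, Finset.mem_univ _, hij⟩,
          by simp [hpre]⟩
    calc (univ.filter (fun g : Fin M → Fin (K+1) → Fin (n+2) => ¬ Good g)).card
        ≤ _ := Finset.card_le_card hsub
      _ ≤ _ := Finset.card_union_le _ _
      _ ≤ M * ((n+2)^(K+1))^(M-1) + M * M * ((K+2) * ((n+2)^(K+1))^(M-1)) := by
          gcongr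
          · calc (univ.biUnion (fun i : Fin M =>
                univ.filter (fun g : Fin M → Fin (K+1) → Fin (n+2) => sg g i = []))).card
                ≤ ∑ i : Fin M, (univ.filter
                    (fun g : Fin M → Fin (K+1) → Fin (n+2) => sg g i = [])).card :=
                  Finset.card_biUnion_le
              _ ≤ ∑ _i : Fin M, ((n+2)^(K+1))^(M-1) := by
                  apply Finset.sum_le_sum; intro i _; exact countA i
              _ = M * ((n+2)^(K+1))^(M-1) := by simp [Finset.sum_const, mul_comm]
          · calc ((univ : Finset (Fin M)).offDiag.biUnion (fun p =>
                univ.filter (fun g : Fin M → Fin (K+1) → Fin (n+2) =>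
                  sg g p.1 <+: sg g p.2))).card
                ≤ ∑ p ∈ (univ : Finset (Fin M)).offDiag, (univ.filter
                    (fun g : Fin M → Fin (K+1) → Fin (n+2) => sg g p.1 <+: sg g p.2)).card :=
                  Finset.card_biUnion_le
              _ ≤ ∑ _p ∈ (univ : Finset (Fin M)).offDiag, (K+2) * ((n+2)^(K+1))^(M-1) := by
                  apply Finset.sum_le_sum; intro p hp
                  exact countB p.1 p.2 (Finset.mem_offDiag.mp hp).2.2
              _ = (univ : Finset (Fin M)).offDiag.card * ((K+2) * ((n+2)^(K+1))^(M-1)) := by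
                  simp [Finset.sum_const, mul_comm]
              _ ≤ M * M * ((K+2) * ((n+2)^(K+1))^(M-1)) := by
                  gcongr
                  calc (univ : Finset (Fin M)).offDiag.card
                      = M * M - M := by rw [Finset.offDiag_card]; simp
                    _ ≤ M * M := Nat.sub_le _ _
  calc ((n+2)^(K+1))^M = (Finset.univ : Finset (Fin M → Fin (K+1) → Fin (n+2))).card :=
        htotal.symm
    _ = (univ.filter Good).card + (univ.filter (fun g => ¬ Good g)).card := hsplit.symm
    _ ≤ _ := by omega

end Count

section Inj
open scoped Classical
variable {n M K : ℕ}

/-- the length distribution -/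
def Ldist (n M K : ℕ) : Fin (M+1) → ℕ := Fin.cons 1 (fun _ : Fin M => K + 1)

lemma UD_finite_s7 : (UD (n+2) (Ldist n M K)).Finite := by
  apply Set.Finite.subset (Set.Finite.pi (t := fun i : Fin (M+1) =>
    {l : List (Fin (n+2)) | l.length = Ldist n M K i}) (fun i => List.finite_length_eq _ _))
  intro v hv
  exact fun i _ => hv.1 i

lemma UD_lower :
    (n+2) * (univ.filter (Good (n := n) (M := M) (K := K))).card
      ≤ (UD (n+2) (Ldist n M K)).ncard := by
  classical
  have hcard : (n+2) * (univ.filter (Good (n := n) (M := M) (K := K))).card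
      = (Set.univ : Set (Fin (n+2) × {g : Fin M → Fin (K+1) → Fin (n+2) // Good g})).ncard := by
    rw [Set.ncard_univ, Nat.card_eq_fintype_card, Fintype.card_prod, Fintype.card_fin,
      Fintype.card_subtype]
  rw [hcard]
  apply Set.ncard_le_ncard_of_injOn
    (fun xg => Fin.cons [xg.1] (fun i => (List.ofFn (xg.2.1 i)).map (Equiv.swap 0 xg.1)))
    ?_ ?_ UD_finite_s7
  · rintro ⟨x, g, hg⟩ -
    show (Fin.cons [x] (fun i => (List.ofFn (g i)).map (Equiv.swap 0 x)) :
        Fin (M+1) → List (Fin (n+2))) ∈ UD (n+2) (Ldist n M K)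
    constructor
    · intro i
      rcases Fin.eq_zero_or_eq_succ i with rfl | ⟨j, rfl⟩
      · simp [Ldist]
      · simp [Ldist, Fin.cons_succ]
    · have hrw : (Fin.cons [x] (fun i => (List.ofFn (g i)).map (Equiv.swap 0 x)) :
          Fin (M+1) → List (Fin (n+2)))
          = Fin.cons [x] (fun i =>
              List.replicate ((List.ofFn (g i)).takeWhile p0).length x
                ++ (sg g i).map (Equiv.swap 0 x)) := by
        funext i
        rcases Fin.eq_zero_or_eq_succ i with rfl | ⟨j, rfl⟩
        · rfl
        · simp only [Fin.cons_succ]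
          conv_lhs => rw [decomp_w (List.ofFn (g j))]
          rw [List.map_append, List.map_replicate, Equiv.swap_apply_left]
          rfl
      rw [hrw]
      apply isUD_shift
      · intro i
        simp only [ne_eq, List.map_eq_nil_iff]
        exact hg.1 i
      · intro i
        obtain ⟨y, l', hyl⟩ := List.exists_cons_of_ne_nil (hg.1 i)
        rw [hyl]
        simp only [List.map_cons, List.head?_cons, ne_eq, Option.some.injEq]
        intro hcontra
        have : y = 0 := by
          have := (Equiv.swap 0 x).injective (a₁ := y) (a₂ := 0)
          apply this
          rw [Equiv.swap_apply_left, hcontra]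
        exact st_head _ _ _ hyl this
      · intro i j hij hpre
        apply hg.2 i j hij
        have h2 := hpre.map (Equiv.swap 0 x)
        have hid : (⇑(Equiv.swap 0 x) ∘ ⇑(Equiv.swap 0 x)) = id :=
          funext fun z => Equiv.swap_apply_self _ _ _
        simpa [List.map_map, hid] using h2
  · rintro ⟨x₁, g₁, hg₁⟩ - ⟨x₂, g₂, hg₂⟩ - heq
    have h0 : x₁ = x₂ := by
      have := congrFun heq 0
      simp only [Fin.cons_zero, List.cons.injEq] at this
      exact this.1
    subst h0
    have hg : g₁ = g₂ := by
      funext i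
      have := congrFun heq (Fin.succ i)
      simp only [Fin.cons_succ] at this
      have := List.map_injective_iff.mpr (Equiv.swap 0 x₁).injective this
      exact List.ofFn_injective this
    simp [hg]

lemma card_ne_zero' : Fintype.card {y : Fin (n+2) // y ≠ 0} = n + 1 := by
  have h1 : Fintype.card {y : Fin (n+2) // y = 0} = 1 := Fintype.card_subtype_eq 0
  have h := Fintype.card_subtype_compl (fun y : Fin (n+2) => y = 0)
  simp only [h1, Fintype.card_fin] at h
  simpa using h

lemma PR_upper :
    (PR (n+2) (Ldist n M K)).ncard ≤ (n+2) * ((n+1) * (n+2)^K)^M := by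
  classical
  have hcard : (n+2) * ((n+1) * (n+2)^K)^M
      = (Set.univ : Set (Fin (n+2) × (Fin M →
          {y : Fin (n+2) // y ≠ 0} × (Fin K → Fin (n+2))))).ncard := by
    rw [Set.ncard_univ, Nat.card_eq_fintype_card, Fintype.card_prod, Fintype.card_fin,
      Fintype.card_fun, Fintype.card_prod, card_ne_zero', Fintype.card_fun,
      Fintype.card_fin, Fintype.card_fin, Fintype.card_fin]
  rw [hcard]
  set F : (Fin (M+1) → List (Fin (n+2))) →
      Fin (n+2) × (Fin M → {y : Fin (n+2) // y ≠ 0} × (Fin K → Fin (n+2))) := fun v =>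
    ((v 0).getD 0 0, fun i =>
      (if h : (Equiv.swap 0 ((v 0).getD 0 0)) ((v (Fin.succ i)).getD 0 0) ≠ 0
        then ⟨_, h⟩ else ⟨1, one_ne_zero⟩,
       fun t => (Equiv.swap 0 ((v 0).getD 0 0)) ((v (Fin.succ i)).getD (t.1+1) 0))) with hF
  apply Set.ncard_le_ncard_of_injOn F (fun _ _ => Set.mem_univ _) ?_ (Set.finite_univ)
  intro v₁ hv₁ v₂ hv₂ heq
  -- basic facts about members of PR
  have len1 : ∀ v ∈ PR (n+2) (Ldist n M K), v 0 = [(v 0).getD 0 0] := by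
    intro v hv
    have h := hv.1 0
    simp only [Ldist, Fin.cons_zero] at h
    match hv0 : v 0 with
    | [c] => simp [hv0]
    | [] => rw [hv0] at h; simp at h
    | c₁ :: c₂ :: l => rw [hv0] at h; simp at h
  have lenk : ∀ v ∈ PR (n+2) (Ldist n M K), ∀ i : Fin M,
      (v (Fin.succ i)).length = K + 1 := by
    intro v hv i
    have h := hv.1 (Fin.succ i)
    simpa [Ldist, Fin.cons_succ] using h
  have hfirst : ∀ v ∈ PR (n+2) (Ldist n M K), ∀ i : Fin M,
      (v (Fin.succ i)).getD 0 0 ≠ (v 0).getD 0 0 := by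
    intro v hv i hcontra
    apply hv.2.2.2 0 (Fin.succ i) (Fin.succ_ne_zero i).symm
    rw [len1 v hv]
    match hvi : v (Fin.succ i) with
    | [] => have := lenk v hv i; rw [hvi] at this; simp at this
    | c :: l =>
      rw [hvi] at hcontra
      simp only [List.getD_cons_zero] at hcontra
      rw [← hcontra]
      exact ⟨l, rfl⟩
  -- x equal
  have hx : (v₁ 0).getD 0 0 = (v₂ 0).getD 0 0 := congrArg Prod.fst heq
  have h0 : v₁ 0 = v₂ 0 := by rw [len1 v₁ hv₁, len1 v₂ hv₂, hx]
  -- words equal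
  funext i
  rcases Fin.eq_zero_or_eq_succ i with rfl | ⟨j, rfl⟩
  · exact h0
  · have hcomp := congrFun (congrArg Prod.snd heq) j
    set σ := Equiv.swap (0 : Fin (n+2)) ((v₁ 0).getD 0 0) with hσ
    have hσ2 : Equiv.swap (0 : Fin (n+2)) ((v₂ 0).getD 0 0) = σ := by rw [hσ, hx]
    have hb1 : σ ((v₁ (Fin.succ j)).getD 0 0) ≠ 0 := by
      intro hc
      apply hfirst v₁ hv₁ j
      have := σ.injective (a₁ := (v₁ (Fin.succ j)).getD 0 0) (a₂ := (v₁ 0).getD 0 0)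
      apply this
      rw [hc, hσ, Equiv.swap_apply_right]
    have hb2 : σ ((v₂ (Fin.succ j)).getD 0 0) ≠ 0 := by
      intro hc
      apply hfirst v₂ hv₂ j
      have := σ.injective (a₁ := (v₂ (Fin.succ j)).getD 0 0) (a₂ := (v₂ 0).getD 0 0)
      apply this
      rw [hc, hσ, hx, Equiv.swap_apply_right]
    have hget : ∀ jj : ℕ, jj < K + 1 →
        (v₁ (Fin.succ j)).getD jj 0 = (v₂ (Fin.succ j)).getD jj 0 := by
      intro jj hjj
      rcases Nat.eq_zero_or_pos jj with rfl | hpos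
      · have h1 := congrArg Prod.fst hcomp
        simp only [hF, hσ2, ← hσ] at h1
        rw [dif_pos hb1, dif_pos hb2] at h1
        have h2 : σ ((v₁ (Fin.succ j)).getD 0 0) = σ ((v₂ (Fin.succ j)).getD 0 0) := by
          have := congrArg Subtype.val h1
          simpa [σ] using this
        exact σ.injective h2
      · obtain ⟨t, rfl⟩ := Nat.exists_eq_add_of_lt hpos
        have h1 := congrFun (congrArg Prod.snd hcomp) ⟨t, by omega⟩
        simp only [hF, hσ2, ← hσ] at h1
        have : σ ((v₁ (Fin.succ j)).getD (t+1) 0) = σ ((v₂ (Fin.succ j)).getD (t+1) 0) := h1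
        simpa [zero_add] using σ.injective this
    apply List.ext_getElem (by rw [lenk v₁ hv₁ j, lenk v₂ hv₂ j])
    intro jj hj1 hj2
    have hlt : jj < K + 1 := by rw [lenk v₁ hv₁ j] at hj1; exact hj1
    have := hget jj hlt
    rwa [List.getD_eq_getElem _ _ hj1, List.getD_eq_getElem _ _ hj2] at this

end Inj

-- analysis section
section Analysis
open scoped Classical

lemma pow_succ_bound (c : ℕ) : ∀ i, 1 ≤ i → ((c+1 : ℕ):ℝ)^i + 1 ≤ ((c+2 : ℕ):ℝ)^i := by
  intro i hi
  induction i, hi using Nat.le_induction with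
  | base => push_cast; norm_num; linarith
  | succ i hi ih =>
    have h1 : (1:ℝ) ≤ ((c+2 : ℕ):ℝ)^i := one_le_pow₀ (by push_cast; linarith)
    rw [pow_succ, pow_succ]
    push_cast at *
    nlinarith

lemma eta_le (c M : ℕ) : eta (c+2) (M+1) ≤ (1 + 1/((c+1 : ℕ):ℝ))^M := by
  have hexp : (1 + 1/((c+1 : ℕ):ℝ))^M
      = ∑ i ∈ Finset.range (M+1), (1/((c+1 : ℕ):ℝ))^i * (M.choose i) := by
    rw [add_comm, add_pow]; simp
  have hins : Finset.range (M+1) = insert 0 (Finset.Icc 1 M) := by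
    ext a; simp; omega
  rw [hexp, hins, Finset.sum_insert (by simp)]
  simp only [pow_zero, Nat.choose_zero_right, Nat.cast_one, one_mul]
  unfold eta
  simp only [Nat.add_sub_cancel]
  apply add_le_add_right
  apply Finset.sum_le_sum
  intro i hi
  obtain ⟨hi1, hi2⟩ := Finset.mem_Icc.mp hi
  rw [one_div_pow, mul_comm, mul_one_div]
  have hpos : (0:ℝ) < ((c+1 : ℕ):ℝ)^i := by positivity
  have hle : ((c+1 : ℕ):ℝ)^i ≤ ((c+2 : ℕ):ℝ)^i - 1 := by
    have := pow_succ_bound c i hi1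
    linarith
  gcongr

/-- Theorem 3: `ξ_{n,m} ≤ 1/η_{n,m}`. -/
theorem stmt7 (n m : ℕ) (hn : 2 ≤ n) (hm : 1 ≤ m) : xi n m ≤ 1 / eta n m := by
  obtain ⟨c, rfl⟩ : ∃ c, n = c + 2 := ⟨n - 2, by omega⟩
  -- boundedness below of the xi set
  have hbdd : ∀ m', BddBelow {r : ℝ | ∃ L : Fin m' → ℕ, (∀ i, 1 ≤ L i) ∧
      (UD (c+2) L).Nonempty ∧ r = rho (c+2) L} := by
    intro m'
    refine ⟨0, ?_⟩
    rintro r ⟨L, -, -, rfl⟩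
    unfold rho
    positivity
  obtain ⟨M', rfl⟩ : ∃ M', m = M' + 1 := ⟨m - 1, by omega⟩
  rcases Nat.eq_zero_or_pos M' with rfl | hM'
  · -- m = 1 case
    have heta : eta (c+2) 1 = 1 := by unfold eta; simp
    rw [heta]
    rw [show (1:ℝ)/1 = 1 by norm_num]
    -- witness: L = Ldist c 0 0
    have hUDone : ∀ x : Fin (c+2), (fun _ : Fin 1 => [x]) ∈ UD (c+2) (Ldist c 0 0) := by
      intro x
      constructor
      · intro i
        rcases Fin.eq_zero_or_eq_succ i with rfl | ⟨j, rfl⟩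
        · rfl
        · exact Fin.elim0 j
      · have : (fun _ : Fin 1 => ([x] : List (Fin (c+2))))
            = Fin.cons [x] (fun i : Fin 0 =>
                List.replicate (Fin.elim0 i) x ++ Fin.elim0 i) := by
          funext i
          rcases Fin.eq_zero_or_eq_succ i with rfl | ⟨j, rfl⟩
          · rfl
          · exact Fin.elim0 j
        rw [this]
        exact isUD_shift x _ _ (fun i => Fin.elim0 i) (fun i => Fin.elim0 i)
          (fun i => Fin.elim0 i)
    have hPRsub : PR (c+2) (Ldist c 0 0) ⊆ UD (c+2) (Ldist c 0 0) := by
      rintro v ⟨hlen, hpc⟩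
      refine ⟨hlen, ?_⟩
      have h0 : v 0 = [(v 0).getD 0 0] := by
        have h := hlen 0
        simp only [Ldist, Fin.cons_zero] at h
        match hv0 : v 0 with
        | [a] => simp
        | [] => rw [hv0] at h; simp at h
        | a :: b :: l => rw [hv0] at h; simp at h
      have hv : v = (fun _ : Fin 1 => [(v 0).getD 0 0]) := by
        funext i
        rcases Fin.eq_zero_or_eq_succ i with rfl | ⟨j, rfl⟩
        · exact h0
        · exact Fin.elim0 j
      rw [hv]
      exact (hUDone _).2
    have hne : (UD (c+2) (Ldist c 0 0)).Nonempty := ⟨_, hUDone 0⟩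
    have hxle : rho (c+2) (Ldist c 0 0) ≤ 1 := by
      unfold rho
      apply div_le_one_of_le₀
      · exact_mod_cast Nat.cast_le.mpr (Set.ncard_le_ncard hPRsub UD_finite_s7)
      · positivity
    calc xi (c+2) (0+1) ≤ rho (c+2) (Ldist c 0 0) :=
          csInf_le (hbdd 1) ⟨Ldist c 0 0, by
            intro i
            rcases Fin.eq_zero_or_eq_succ i with rfl | ⟨j, rfl⟩
            · simp [Ldist]
            · exact Fin.elim0 j, hne, rfl⟩
      _ ≤ 1 := hxle
  · -- m = M + 1, M ≥ 1
    obtain ⟨M0, rfl⟩ : ∃ M0, M' = M0 + 1 := ⟨M' - 1, by omega⟩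
    obtain ⟨M, hM⟩ : ∃ M, M = M0 + 1 := ⟨M0 + 1, rfl⟩
    rw [← hM]
    obtain ⟨b, hb⟩ : ∃ b : ℝ, b = ((c+2 : ℕ) : ℝ) := ⟨_, rfl⟩
    have hb1 : (1:ℝ) < b := by rw [hb]; push_cast; linarith
    have hbpos : (0:ℝ) < b := by linarith
    obtain ⟨P, hP⟩ : ∃ P : ℕ → ℝ, P = fun K => b^(K+1) := ⟨_, rfl⟩
    obtain ⟨E, hE⟩ : ∃ E : ℕ → ℝ, E = fun K : ℕ => (M:ℝ) + (M:ℝ)*(M:ℝ)*((K:ℝ)+2) := ⟨_, rfl⟩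
    obtain ⟨eps, heps⟩ : ∃ e : ℕ → ℝ, e = fun K => E K / P K := ⟨_, rfl⟩
    obtain ⟨l, hl⟩ : ∃ l : ℝ, l = ((c+1 : ℕ):ℝ)^M / b^M := ⟨_, rfl⟩
    have hc1pos : (0:ℝ) < ((c+1 : ℕ):ℝ) := by push_cast; linarith
    have hlpos : 0 < l := by
      rw [hl]; exact div_pos (pow_pos hc1pos M) (pow_pos hbpos M)
    have hPpos : ∀ K, 0 < P K := by intro K; simp only [hP]; exact pow_pos hbpos _
    have hEnn : ∀ K, 0 ≤ E K := by intro K; simp only [hE]; positivity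
    -- eps tends to 0
    have heps0 : Filter.Tendsto eps atTop (𝓝 0) := by
      have hr : ‖(b⁻¹ : ℝ)‖ < 1 := by
        rw [Real.norm_eq_abs, abs_of_pos (by positivity)]
        rw [inv_lt_one_iff₀]; right; exact hb1
      have h1 : Filter.Tendsto (fun K : ℕ => (K:ℝ)^1 * b⁻¹^K) atTop (𝓝 0) :=
        (summable_pow_mul_geometric_of_norm_lt_one 1 hr).tendsto_atTop_zero
      have h2 : Filter.Tendsto (fun K : ℕ => b⁻¹^K) atTop (𝓝 0) :=
        tendsto_pow_atTop_nhds_zero_of_norm_lt_one hr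
      have heq : eps = fun K : ℕ => ((M:ℝ) + (M:ℝ)*(M:ℝ)*((K:ℝ)+2)) * b⁻¹^(K+1) := by
        funext K
        simp only [heps, hE, hP]
        rw [div_eq_mul_inv, inv_pow]
      rw [heq]
      have hexpand : (fun K : ℕ => ((M:ℝ) + (M:ℝ)*(M:ℝ)*((K:ℝ)+2)) * b⁻¹^(K+1))
          = fun K : ℕ => ((M:ℝ) * b⁻¹^(K+1)
              + (M:ℝ)*(M:ℝ)*(((K+1:ℕ):ℝ)^1 * b⁻¹^(K+1) + b⁻¹^(K+1))) := by
        funext K; push_cast; ring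
      rw [hexpand]
      have hs2 : Filter.Tendsto (fun K : ℕ => b⁻¹^(K+1)) atTop (𝓝 0) :=
        h2.comp (tendsto_add_atTop_nat 1)
      have hs1 : Filter.Tendsto (fun K : ℕ => ((K+1:ℕ):ℝ)^1 * b⁻¹^(K+1)) atTop (𝓝 0) :=
        h1.comp (tendsto_add_atTop_nat 1)
      have := ((hs2.const_mul (M:ℝ)).add (((hs1.add hs2)).const_mul ((M:ℝ)*(M:ℝ))))
      simpa using this
    -- F tends to l
    obtain ⟨F, hF⟩ : ∃ F : ℕ → ℝ, F = fun K => l / (1 - eps K) := ⟨_, rfl⟩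
    have hFlim : Filter.Tendsto F atTop (𝓝 l) := by
      rw [hF]
      have h1 : Filter.Tendsto (fun K => 1 - eps K) atTop (𝓝 1) := by
        have := (tendsto_const_nhds (x := (1:ℝ)) (f := atTop (α := ℕ))).sub heps0
        simpa using this
      have := (tendsto_const_nhds (x := l) (f := atTop (α := ℕ))).div h1 one_ne_zero
      rw [div_one] at this; exact this
    -- eventually xi ≤ F K
    have hev : ∀ᶠ K in atTop, xi (c+2) (M+1) ≤ F K := by
      filter_upwards [heps0.eventually_lt_const (show (0:ℝ) < 1/2 by norm_num)] with K hepsK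
      have hepsK' : E K / P K < 1/2 := by
        have h' := hepsK
        simp only [heps] at h'
        exact h'
      have hPE : E K < P K / 2 := by
        have h3 : E K = (E K / P K) * P K := (div_mul_cancel₀ (E K) (ne_of_gt (hPpos K))).symm
        calc E K = (E K / P K) * P K := h3
          _ < (1/2) * P K := mul_lt_mul_of_pos_right hepsK' (hPpos K)
          _ = P K / 2 := by ring
      have hDpos : 0 < P K - E K := by linarith [hPpos K]
      have hDne : P K - E K ≠ 0 := ne_of_gt hDpos
      obtain ⟨R, hR⟩ : ∃ R : ℝ, R = b^((K+1)*M0) := ⟨_, rfl⟩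
      have hRpos : 0 < R := by rw [hR]; exact pow_pos hbpos _
      set Gc := (univ.filter (Good (n := c) (M := M) (K := K))).card with hGc
      -- real versions of counting bounds
      have hGreal : P K * R - E K * R ≤ (Gc : ℝ) := by
        have hcount := countGood (n := c) (M := M) (K := K)
        have hM1 : M - 1 = M0 := by omega
        rw [hM1] at hcount
        have hcast : (((c+2):ℝ)^(K+1))^M ≤ (Gc:ℝ) + (M:ℝ) * (((c+2):ℝ)^(K+1))^M0
            + (M:ℝ)*(M:ℝ) * (((K:ℝ)+2) * (((c+2):ℝ)^(K+1))^M0) := by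
          exact_mod_cast hcount
        have e1 : (((c+2):ℝ)^(K+1))^M0 = R := by
          rw [hR, hb]; push_cast; rw [← pow_mul]
        have e2 : (((c+2):ℝ)^(K+1))^M = P K * R := by
          simp only [hR, hP, hb]; push_cast; rw [← pow_mul, ← pow_add]
          congr 1; rw [hM]; ring
        rw [e1, e2] at hcast
        simp only [hE]
        nlinarith [hcast]
      have hPRE : (0:ℝ) < P K * R - E K * R := by
        have h3 : P K * R - E K * R = (P K - E K) * R := by ring
        rw [h3]
        exact mul_pos hDpos hRpos
      have hGpos : (0:ℝ) < (Gc:ℝ) := lt_of_lt_of_le hPRE hGreal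
      have hUDreal : ((c+2):ℝ) * (P K * R - E K * R)
          ≤ ((UD (c+2) (Ldist c M K)).ncard : ℝ) := by
        have h1 := UD_lower (n := c) (M := M) (K := K)
        have h2 : ((c+2:ℕ):ℝ) * (Gc:ℝ) ≤ ((UD (c+2) (Ldist c M K)).ncard : ℝ) := by
          exact_mod_cast h1
        push_cast at h2 ⊢
        nlinarith [hPRE, hGreal]
      have hUDpos : (0:ℝ) < ((UD (c+2) (Ldist c M K)).ncard : ℝ) := by
        have hx : (0:ℝ) < ((c+2):ℝ) * (P K * R - E K * R) :=
          mul_pos (by positivity) hPRE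
        linarith
      have hUDne : (UD (c+2) (Ldist c M K)).Nonempty := by
        apply Set.nonempty_of_ncard_ne_zero
        intro hz
        rw [hz] at hUDpos
        simp at hUDpos
      have hPRreal : ((PR (c+2) (Ldist c M K)).ncard : ℝ)
          ≤ ((c+2):ℝ) * (((c+1):ℝ) * b^K)^M := by
        have h1 := PR_upper (n := c) (M := M) (K := K)
        have h2 : ((PR (c+2) (Ldist c M K)).ncard : ℝ)
            ≤ (((c+2) * ((c+1) * (c+2)^K)^M : ℕ) : ℝ) := by exact_mod_cast h1
        push_cast at h2
        rw [hb]; push_cast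
        linarith
      -- xi ≤ rho
      have hxi : xi (c+2) (M+1) ≤ rho (c+2) (Ldist c M K) := by
        apply csInf_le (hbdd (M+1))
        refine ⟨Ldist c M K, ?_, hUDne, rfl⟩
        intro i
        rcases Fin.eq_zero_or_eq_succ i with rfl | ⟨j, rfl⟩
        · simp [Ldist]
        · simp [Ldist]
      -- rho ≤ F K
      have hepsnn : 0 ≤ eps K := by
        simp only [heps]; exact div_nonneg (hEnn K) (le_of_lt (hPpos K))
      have hepslt : eps K < 1 := by
        have : eps K < 1/2 := hepsK
        linarith
      have hFpos : 0 ≤ F K := by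
        simp only [hF]
        apply div_nonneg (le_of_lt hlpos)
        linarith
      have hrho : rho (c+2) (Ldist c M K) ≤ F K := by
        unfold rho
        rw [div_le_iff₀ hUDpos]
        have hfrac : 1 - eps K = (P K - E K) / P K := by
          simp only [heps]
          have hPne : P K ≠ 0 := ne_of_gt (hPpos K)
          field_simp
        have hpow : P K * R = b ^ (K * M) * b ^ M := by
          simp only [hP, hR]
          rw [← pow_add, ← pow_add]
          congr 1
          rw [hM]; ring
        have hbM : (b:ℝ)^M ≠ 0 := ne_of_gt (pow_pos hbpos M)
        have hFeq : F K = ((c+1 : ℕ):ℝ)^M * P K / (b^M * (P K - E K)) := by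
          simp only [hF, hl]
          rw [hfrac, div_div_eq_mul_div, div_mul_eq_mul_div, div_div]
        have hkey : ((c+2):ℝ) * (((c+1 : ℕ):ℝ) * b^K)^M
            = F K * (((c+2):ℝ) * (P K * R - E K * R)) := by
          rw [hFeq, mul_pow, ← pow_mul]
          rw [show P K * R - E K * R = (P K - E K) * R by ring]
          rw [div_mul_eq_mul_div, eq_div_iff (by
            exact mul_ne_zero hbM hDne)]
          have expand : ((c+1 : ℕ):ℝ)^M * P K * (((c+2):ℝ) * ((P K - E K) * R))
              = ((c+2):ℝ) * ((c+1 : ℕ):ℝ)^M * (P K * R) * (P K - E K) := by ring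
          rw [expand, hpow]
          ring
        have hc1cast : ((c+1 : ℕ):ℝ) = ((c:ℝ)+1) := by push_cast; ring
        calc ((PR (c+2) (Ldist c M K)).ncard : ℝ)
            ≤ ((c+2):ℝ) * (((c+1 : ℕ):ℝ) * b^K)^M := by
              rw [hc1cast]; exact hPRreal
          _ = F K * (((c+2):ℝ) * (P K * R - E K * R)) := hkey
          _ ≤ F K * ((UD (c+2) (Ldist c M K)).ncard : ℝ) :=
              mul_le_mul_of_nonneg_left hUDreal hFpos
      calc xi (c+2) (M+1) ≤ rho (c+2) (Ldist c M K) := hxi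
        _ ≤ F K := hrho
    -- conclude
    have hxl : xi (c+2) (M+1) ≤ l := ge_of_tendsto hFlim hev
    have hfin : l ≤ 1 / eta (c+2) (M+1) := by
      have hetapos : 0 < eta (c+2) (M+1) := by
        unfold eta
        have hsum : (0:ℝ) ≤ ∑ i ∈ Finset.Icc 1 (M+1-1),
            (((M+1-1).choose i : ℕ):ℝ) / ((((c+2:ℕ)):ℝ)^i - 1) := by
          apply Finset.sum_nonneg
          intro i hi
          obtain ⟨hi1, -⟩ := Finset.mem_Icc.mp hi
          apply div_nonneg (by positivity)
          have h1 : (1:ℝ) ≤ (((c+2:ℕ)):ℝ)^i := one_le_pow₀ (by push_cast; linarith)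
          linarith
        push_cast at hsum ⊢
        linarith
      have h1 : eta (c+2) (M+1) ≤ (1 + 1/((c+1 : ℕ):ℝ))^M := by
        have := eta_le c M
        convert this using 3 <;> omega
      have h2 : 1/(1 + 1/((c+1 : ℕ):ℝ))^M ≤ 1/eta (c+2) (M+1) :=
        one_div_le_one_div_of_le hetapos h1
      have h3 : l = 1/(1 + 1/((c+1 : ℕ):ℝ))^M := by
        rw [hl, hb]
        rw [show (1 + 1/((c+1 : ℕ):ℝ)) = ((c+2:ℕ):ℝ)/((c+1:ℕ):ℝ) by
          push_cast; field_simp; ring]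
        rw [one_div, ← inv_pow, inv_div, div_pow]
      rw [h3]
      exact h2
    linarith
end Analysis
end
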